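/- arXiv:2310.00103 — 4 statements merged into one kernel-verified Lean document; each statement's English description precedes it below -/
import Mathlib

section
/- Every simple object L of C_k contains a nonzero homogeneous vector v, of some degree μ ∈ ℤ^θ, such that u·v = 0 for every homogeneous u ∈ U⁺ of nonzero degree, and then L ≅ L(μ). Moreover L(μ) ≅ L(λ) in C_k if and only if μ = λ; thus μ ↦ L(μ) is a bijection between ℤ^θ and isomorphism classes of simple objects of C_k. -/
open scoped TensorProduct

/-- The data of a `ℤ^θ`-graded algebra over `k` with a triangular decomposition
`U⁻ ⊗ U⁰ ⊗ U⁺ ≃ U` satisfying the axioms of Andersen–Jantzen–Soergel, together with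
the character-twist `μ ↦ μ̃` and the base algebra map `π : U⁰ → k`. -/
structure AJSCtx (k : Type) [Field k] (θ : ℕ) where
  /-- the underlying algebra -/
  U : Type
  [ringU : Ring U]
  [algU : Algebra k U]
  /-- the `ℤ^θ`-grading of `U` -/
  grade : (Fin θ → ℤ) → Submodule k U
  internal : DirectSum.IsInternal grade
  one_mem : (1 : U) ∈ grade 0
  mul_mem : ∀ {ν μ : Fin θ → ℤ} {a b : U}, a ∈ grade ν → b ∈ grade μ → a * b ∈ grade (ν + μ)
  /-- the negative part `U⁻` -/
  Um : Subalgebra k U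
  /-- the zero part `U⁰` -/
  U0 : Subalgebra k U
  /-- the positive part `U⁺` -/
  Up : Subalgebra k U
  Um_graded : Subalgebra.toSubmodule Um = ⨆ ν, Subalgebra.toSubmodule Um ⊓ grade ν
  U0_graded : Subalgebra.toSubmodule U0 = ⨆ ν, Subalgebra.toSubmodule U0 ⊓ grade ν
  Up_graded : Subalgebra.toSubmodule Up = ⨆ ν, Subalgebra.toSubmodule Up ⊓ grade ν
  /-- multiplication induces a linear isomorphism `U⁻ ⊗ U⁰ ⊗ U⁺ → U` -/
  triangular :
    Function.Bijective
      (TensorProduct.lift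
        ((LinearMap.mul k U).compl₁₂ Um.val.toLinearMap
          (TensorProduct.lift
            ((LinearMap.mul k U).compl₁₂ U0.val.toLinearMap Up.val.toLinearMap))))
  U0_deg0 : Subalgebra.toSubmodule U0 ≤ grade 0
  Up_deg0 : Subalgebra.toSubmodule Up ⊓ grade 0 = Submodule.span k {1}
  Um_deg0 : Subalgebra.toSubmodule Um ⊓ grade 0 = Submodule.span k {1}
  Up_pos : ∀ ν : Fin θ → ℤ, Subalgebra.toSubmodule Up ⊓ grade ν ≠ ⊥ → 0 ≤ ν
  Um_neg : ∀ ν : Fin θ → ℤ, Subalgebra.toSubmodule Um ⊓ grade ν ≠ ⊥ → ν ≤ 0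
  finUp : FiniteDimensional k Up
  finUm : FiniteDimensional k Um
  commU0 : ∀ s t : U0, s * t = t * s
  /-- the group homomorphism `μ ↦ μ̃` into algebra automorphisms of `U⁰` -/
  tilde : (Fin θ → ℤ) → (U0 ≃ₐ[k] U0)
  tilde_zero : tilde 0 = AlgEquiv.refl
  tilde_add : ∀ μ ν : Fin θ → ℤ, tilde (μ + ν) = (tilde μ).trans (tilde ν)
  tilde_comm : ∀ (μ : Fin θ → ℤ), ∀ u ∈ grade μ, ∀ s : U0, (s : U) * u = u * ((tilde μ s : U))
  /-- the algebra map `π : U⁰ → k` -/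
  π : U0 →ₐ[k] k

attribute [instance] AJSCtx.ringU AJSCtx.algU

variable {k : Type} [Field k] {θ : ℕ}

/-- An object of the category `C_k`: a finite-dimensional `ℤ^θ`-graded `U`-module `M`
with `s·m = π(μ̃(s))·m` for `s ∈ U⁰` and `m ∈ M` homogeneous of degree `μ`. -/
structure CMod (C : AJSCtx k θ) where
  /-- the underlying space -/
  M : Type
  [acg : AddCommGroup M]
  [modk : Module k M]
  /-- the action of `U`, as a representation `U → End_k(M)` -/
  ρ : C.U →ₐ[k] Module.End k M
  /-- the `ℤ^θ`-grading of `M` -/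
  grM : (Fin θ → ℤ) → Submodule k M
  internal : DirectSum.IsInternal grM
  fin : FiniteDimensional k M
  act_graded : ∀ (ν μ : Fin θ → ℤ) (u : C.U) (m : M),
    u ∈ C.grade ν → m ∈ grM μ → ρ u m ∈ grM (ν + μ)
  act_U0 : ∀ (s : C.U0) (μ : Fin θ → ℤ) (m : M),
    m ∈ grM μ → ρ (s : C.U) m = C.π (C.tilde μ s) • m

attribute [instance] CMod.acg CMod.modk CMod.fin

variable {C : AJSCtx k θ}

/-- A submodule is graded if it is the sum of its homogeneous components. -/
def CMod.gradedSub (A : CMod C) (p : Submodule k A.M) : Prop :=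
  p = ⨆ ν, p ⊓ A.grM ν

/-- A submodule stable under the `U`-action. -/
def CMod.stable (A : CMod C) (p : Submodule k A.M) : Prop :=
  ∀ u : C.U, ∀ m ∈ p, A.ρ u m ∈ p

/-- Morphisms in `C_k`: `U`-equivariant degree-preserving `k`-linear maps. -/
def IsCHom (A B : CMod C) (f : A.M →ₗ[k] B.M) : Prop :=
  (∀ (u : C.U) (m : A.M), f (A.ρ u m) = B.ρ u (f m)) ∧
  (∀ ν : Fin θ → ℤ, ∀ m ∈ A.grM ν, f m ∈ B.grM ν)

/-- The space `Hom_{C_k}(A, B)` as a `k`-submodule of the linear maps. -/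
def homC (A B : CMod C) : Submodule k (A.M →ₗ[k] B.M) where
  carrier := {f | IsCHom A B f}
  add_mem' := by
    rintro f g ⟨hf1, hf2⟩ ⟨hg1, hg2⟩
    refine ⟨fun u m => ?_, fun ν m hm => Submodule.add_mem _ (hf2 ν m hm) (hg2 ν m hm)⟩
    simp [LinearMap.add_apply, hf1 u m, hg1 u m, map_add]
  zero_mem' := by
    refine ⟨fun u m => ?_, fun ν m hm => Submodule.zero_mem _⟩
    simp
  smul_mem' := by
    rintro c f ⟨hf1, hf2⟩
    refine ⟨fun u m => ?_, fun ν m hm => Submodule.smul_mem _ _ (hf2 ν m hm)⟩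
    simp [LinearMap.smul_apply, hf1 u m, map_smul]

/-- The linear map `U → M`, `u ↦ u·m`. -/
def actVec (A : CMod C) (m : A.M) : C.U →ₗ[k] A.M where
  toFun u := A.ρ u m
  map_add' a b := by simp [map_add]
  map_smul' c a := by simp [map_smul]

/-- `v` is a highest-weight vector of weight `μ`: it is homogeneous of degree `μ` and is
annihilated by every homogeneous element of `U⁺` of nonzero degree. -/
def IsHWvec (A : CMod C) (μ : Fin θ → ℤ) (v : A.M) : Prop :=
  v ∈ A.grM μ ∧
  ∀ ν : Fin θ → ℤ, ν ≠ 0 → ∀ u ∈ Subalgebra.toSubmodule C.Up ⊓ C.grade ν, A.ρ u v = 0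

/-- A simple object of `C_k`. -/
def CMod.IsSimpleObj (A : CMod C) : Prop :=
  (∃ m : A.M, m ≠ 0) ∧
  ∀ p : Submodule k A.M, A.gradedSub p → A.stable p → p = ⊥ ∨ p = ⊤

/-- `A` is (isomorphic to) the simple module `L(μ)`: it is simple and has a nonzero
highest-weight vector of weight `μ`. -/
def IsHWSimple (μ : Fin θ → ℤ) (A : CMod C) : Prop :=
  A.IsSimpleObj ∧ ∃ v : A.M, v ≠ 0 ∧ IsHWvec A μ v

/-- `Z` together with `m ∈ Z` is (a realization of) the Verma module `Z(μ)`: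
`m` is a highest-weight vector of weight `μ` and the action map `U⁻ → Z`, `a ↦ a·m`,
is a linear isomorphism. -/
def IsVerma (μ : Fin θ → ℤ) (Z : CMod C) (m : Z.M) : Prop :=
  IsHWvec Z μ m ∧ Function.Bijective ((actVec Z m).comp C.Um.val.toLinearMap)

/-- Isomorphism in `C_k`. -/
def CIso (A B : CMod C) : Prop :=
  ∃ f : A.M →ₗ[k] B.M, IsCHom A B f ∧ Function.Bijective f

/-- The subquotient `p/q` of `A` is isomorphic in `C_k` to `B`: there is a surjective
`U`-equivariant degree-preserving linear map `p → B` whose kernel is exactly `q`. -/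
def SubquotIso (A : CMod C) (p q : Submodule k A.M) (B : CMod C) : Prop :=
  ∃ f : ↥p →ₗ[k] B.M,
    Function.Surjective f ∧
    (∀ x : ↥p, f x = 0 ↔ (x : A.M) ∈ q) ∧
    (∀ (u : C.U) (x : ↥p) (h : A.ρ u (x : A.M) ∈ p), f ⟨A.ρ u (x : A.M), h⟩ = B.ρ u (f x)) ∧
    (∀ (ν : Fin θ → ℤ) (x : ↥p), (x : A.M) ∈ A.grM ν → f x ∈ B.grM ν)

/-- A composition series of `A` in `C_k` (by graded `U`-submodules with simple
subquotients). -/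
structure IsCompSeries (A : CMod C) (r : ℕ) (F : Fin (r + 1) → Submodule k A.M) : Prop where
  mono : Monotone F
  bot : F 0 = ⊥
  top : F (Fin.last r) = ⊤
  graded : ∀ i, A.gradedSub (F i)
  stable : ∀ i, A.stable (F i)
  simpleQuot : ∀ i : Fin r, ∃ S : CMod C,
    S.IsSimpleObj ∧ SubquotIso A (F i.succ) (F i.castSucc) S

/-- `[A : L] = n`: some (equivalently, by Jordan–Hölder, any) composition series of `A`
has exactly `n` factors isomorphic to `L`. -/
def HasMult (A L : CMod C) (n : ℕ) : Prop :=
  ∃ (r : ℕ) (F : Fin (r + 1) → Submodule k A.M), IsCompSeries A r F ∧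
    n = Nat.card {i : Fin r // SubquotIso A (F i.succ) (F i.castSucc) L}

/-- Projective object of `C_k`. -/
def CProjective (P : CMod C) : Prop :=
  ∀ (A B : CMod C) (g : A.M →ₗ[k] B.M), IsCHom A B g → Function.Surjective g →
    ∀ f : P.M →ₗ[k] B.M, IsCHom P B f →
      ∃ h : P.M →ₗ[k] A.M, IsCHom P A h ∧ g ∘ₗ h = f

/-- A simple (graded, `U`-stable) submodule. -/
def CMod.IsSimpleSub (A : CMod C) (p : Submodule k A.M) : Prop :=
  p ≠ ⊥ ∧ A.gradedSub p ∧ A.stable p ∧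
    ∀ q ≤ p, A.gradedSub q → A.stable q → q = ⊥ ∨ q = p

/-- The socle: the sum of all simple graded `U`-submodules. -/
def csocle (A : CMod C) : Submodule k A.M :=
  sSup {p : Submodule k A.M | A.IsSimpleSub p}

/-- The antiautomorphism `τ` of `U`. -/
structure TauData (C : AJSCtx k θ) where
  /-- the antiautomorphism, as a linear map -/
  τ : C.U →ₗ[k] C.U
  τ_one : τ 1 = 1
  τ_mul : ∀ a b : C.U, τ (a * b) = τ b * τ a
  τ_invol : ∀ a : C.U, τ (τ a) = a
  τ_fix : ∀ s : C.U0, τ (s : C.U) = (s : C.U)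
  τ_Up : Submodule.map τ (Subalgebra.toSubmodule C.Up) = Subalgebra.toSubmodule C.Um
  τ_deg : ∀ ν : Fin θ → ℤ, ∀ u ∈ C.grade ν, τ u ∈ C.grade (-ν)

/-- `B` is (a realization of) the `τ`-twisted dual `A^τ`: there is a perfect pairing
`B × A → k`, vanishing between distinct homogeneous components, with
`⟨u·b, a⟩ = ⟨b, τ(u)·a⟩`. -/
def IsTauDual (T : TauData C) (A B : CMod C) : Prop :=
  ∃ pr : B.M →ₗ[k] A.M →ₗ[k] k,
    Function.Bijective pr ∧
    (∀ (u : C.U) (b : B.M) (a : A.M), pr (B.ρ u b) a = pr b (A.ρ (T.τ u) a)) ∧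
    (∀ lam ν : Fin θ → ℤ, lam ≠ ν → ∀ b ∈ B.grM lam, ∀ a ∈ A.grM ν, pr b a = 0)

/-- The sum of all graded `U`-submodules `N` of `Z` with `N_μ = 0`. -/
def vermaRad (Z : CMod C) (μ : Fin θ → ℤ) : Submodule k Z.M :=
  sSup {N : Submodule k Z.M | Z.gradedSub N ∧ Z.stable N ∧ N ⊓ Z.grM μ = ⊥}


section PRJ
variable {k : Type} [Field k] {ι V : Type} [AddCommGroup V] [Module k V] [DecidableEq ι]

/-- projection onto the `i`-th component of an internal direct sum -/
noncomputable def prj (g : ι → Submodule k V) (h : DirectSum.IsInternal g) (i : ι) : V →ₗ[k] V :=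
  (g i).subtype ∘ₗ (DirectSum.component k ι (fun j => ↥(g j)) i) ∘ₗ
    (LinearEquiv.ofBijective (DirectSum.coeLinearMap g) h).symm.toLinearMap

variable {g : ι → Submodule k V} (h : DirectSum.IsInternal g)

lemma prj_mem (i : ι) (v : V) : prj g h i v ∈ g i := (((LinearEquiv.ofBijective (DirectSum.coeLinearMap g) h).symm v) i).2

lemma prj_of_mem {i : ι} {v : V} (hv : v ∈ g i) : prj g h i v = v := by
  have := h.ofBijective_coeLinearMap_of_mem hv
  show ↑(((LinearEquiv.ofBijective (DirectSum.coeLinearMap g) h).symm v) i) = v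
  rw [this]

lemma prj_of_mem_ne {i j : ι} (hij : i ≠ j) {v : V} (hv : v ∈ g j) : prj g h i v = 0 := by
  have := h.ofBijective_coeLinearMap_of_mem_ne (Ne.symm hij) hv
  show ↑(((LinearEquiv.ofBijective (DirectSum.coeLinearMap g) h).symm v) i) = (0 : V)
  rw [this]
  rfl

lemma prj_sum (v : V) : ∃ s : Finset ι, v = ∑ i ∈ s, prj g h i v := by
  classical
  set e := LinearEquiv.ofBijective (DirectSum.coeLinearMap g) h with he
  refine ⟨DFinsupp.support (e.symm v), ?_⟩
  have hv : v = e (e.symm v) := (e.apply_symm_apply v).symm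
  conv_lhs => rw [hv, ← DirectSum.sum_support_of (e.symm v), map_sum]
  refine Finset.sum_congr rfl fun i _ => ?_
  show e (DirectSum.of (fun j => ↥(g j)) i ((e.symm v) i)) = _
  rw [he]
  show DirectSum.coeLinearMap g (DirectSum.of (fun j => ↥(g j)) i ((e.symm v) i)) = _
  rw [DirectSum.coeLinearMap_of]
  rfl

lemma graded_iff_prj (p : Submodule k V) :
    (p = ⨆ i, p ⊓ g i) ↔ ∀ v ∈ p, ∀ i, prj g h i v ∈ p := by
  constructor
  · intro hp v hv i
    rw [hp] at hv
    induction hv using Submodule.iSup_induction' with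
    | mem j w hw => rcases eq_or_ne i j with rfl | hij
                    · rw [prj_of_mem h hw.2]; exact hw.1
                    · rw [prj_of_mem_ne h hij hw.2]; exact p.zero_mem
    | zero => simp
    | add x y _ _ hx hy => rw [map_add]; exact p.add_mem hx hy
  · intro hp
    refine le_antisymm ?_ (iSup_le fun i => inf_le_left)
    intro v hv
    obtain ⟨s, hs⟩ := prj_sum h v
    rw [hs]
    exact Submodule.sum_mem _ fun i _ =>
      Submodule.mem_iSup_of_mem i ⟨hp v hv i, prj_mem h i v⟩

lemma prj_mem_of_graded {p : Submodule k V} (hp : p = ⨆ i, p ⊓ g i) {v : V} (hv : v ∈ p)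
    (i : ι) : prj g h i v ∈ p := (graded_iff_prj h p).1 hp v hv i

lemma exists_prj_ne_zero {v : V} (hv : v ≠ 0) : ∃ i, prj g h i v ≠ 0 := by
  by_contra hc
  push_neg at hc
  obtain ⟨s, hs⟩ := prj_sum h v
  exact hv (by rw [hs]; exact Finset.sum_eq_zero fun i _ => hc i)

end PRJ

set_option synthInstance.maxHeartbeats 1000000
set_option maxHeartbeats 2000000
set_option maxRecDepth 8000

section DevU
variable {k : Type} [Field k] {θ : ℕ}

namespace AJSCtx
variable (C : AJSCtx k θ)

lemma one_ne : (1 : C.U) ≠ 0 := by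
  intro h
  have h0 : (1 : C.U0) = 0 := Subtype.ext (by simpa using h)
  have h1 := map_one C.π
  rw [h0, map_zero] at h1
  exact zero_ne_one (α := k) h1

/-- projection onto the degree-`ν` component of `U` -/
noncomputable def prU (ν : Fin θ → ℤ) : C.U →ₗ[k] C.U := prj C.grade C.internal ν

lemma prU_mem (ν : Fin θ → ℤ) (x : C.U) : C.prU ν x ∈ C.grade ν := prj_mem _ _ _

lemma prU_of_mem {ν : Fin θ → ℤ} {x : C.U} (h : x ∈ C.grade ν) : C.prU ν x = x :=
  prj_of_mem _ h

lemma prU_of_mem_ne {ν τ : Fin θ → ℤ} {x : C.U} (h : x ∈ C.grade τ) (hne : ν ≠ τ) :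
    C.prU ν x = 0 := prj_of_mem_ne _ hne h

lemma prU_mem_Um {x : C.U} (hx : x ∈ C.Um) (ν : Fin θ → ℤ) : C.prU ν x ∈ C.Um := by
  have := prj_mem_of_graded C.internal (p := Subalgebra.toSubmodule C.Um) C.Um_graded
    (v := x) hx ν
  simpa [prU] using this

lemma prU_mem_Up {x : C.U} (hx : x ∈ C.Up) (ν : Fin θ → ℤ) : C.prU ν x ∈ C.Up := by
  have := prj_mem_of_graded C.internal (p := Subalgebra.toSubmodule C.Up) C.Up_graded
    (v := x) hx ν
  simpa [prU] using this

lemma Um_homog_le {ν : Fin θ → ℤ} {x : C.U} (hx : x ∈ C.Um) (hg : x ∈ C.grade ν)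
    (h0 : x ≠ 0) : ν ≤ 0 :=
  C.Um_neg ν (Submodule.ne_bot_iff _ |>.2 ⟨x, Submodule.mem_inf.2 ⟨hx, hg⟩, h0⟩)

lemma Up_homog_le {ν : Fin θ → ℤ} {x : C.U} (hx : x ∈ C.Up) (hg : x ∈ C.grade ν)
    (h0 : x ≠ 0) : 0 ≤ ν :=
  C.Up_pos ν (Submodule.ne_bot_iff _ |>.2 ⟨x, Submodule.mem_inf.2 ⟨hx, hg⟩, h0⟩)

lemma prU_up_mem_span {x : C.U} (hx : x ∈ C.Up) : C.prU 0 x ∈ Submodule.span k {(1:C.U)} := by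
  rw [← C.Up_deg0]
  exact Submodule.mem_inf.2 ⟨by simpa using C.prU_mem_Up hx 0, C.prU_mem 0 x⟩

lemma prU_um_mem_span {x : C.U} (hx : x ∈ C.Um) : C.prU 0 x ∈ Submodule.span k {(1:C.U)} := by
  rw [← C.Um_deg0]
  exact Submodule.mem_inf.2 ⟨by simpa using C.prU_mem_Um hx 0, C.prU_mem 0 x⟩

/-- the augmentation `ε : U⁺ → k` -/
noncomputable def epsU : ↥C.Up →ₗ[k] k :=
  (LinearEquiv.coord k C.U 1 C.one_ne).toLinearMap ∘ₗ
    LinearMap.codRestrict (Submodule.span k {(1:C.U)})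
      ((C.prU 0) ∘ₗ (Subalgebra.toSubmodule C.Up).subtype)
      (fun w => C.prU_up_mem_span w.2)

lemma epsU_spec (w : ↥C.Up) : C.prU 0 (w : C.U) = C.epsU w • 1 := by
  have h := LinearEquiv.coord_apply_smul k C.U 1 C.one_ne
    ⟨C.prU 0 (w : C.U), C.prU_up_mem_span w.2⟩
  exact h.symm

lemma epsU_eq_zero {w : ↥C.Up} (h : C.prU 0 (w : C.U) = 0) : C.epsU w = 0 := by
  have := C.epsU_spec w
  rw [h] at this
  rcases smul_eq_zero.1 this.symm with h' | h'
  · exact h'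
  · exact absurd h' C.one_ne

lemma epsU_one : C.epsU 1 = 1 := by
  have h := C.epsU_spec 1
  have h1 : C.prU 0 ((1 : ↥C.Up) : C.U) = 1 := C.prU_of_mem C.one_mem
  rw [h1] at h
  have h2 : C.epsU 1 • (1:C.U) = (1:k) • (1:C.U) := by rw [← h, one_smul]
  exact smul_left_injective k C.one_ne h2

/-- the triangular multiplication map `U⁻ ⊗ U⁰ ⊗ U⁺ → U` -/
noncomputable def trimap : (↥C.Um ⊗[k] (↥C.U0 ⊗[k] ↥C.Up)) →ₗ[k] C.U :=
  TensorProduct.lift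
    ((LinearMap.mul k C.U).compl₁₂ C.Um.val.toLinearMap
      (TensorProduct.lift
        ((LinearMap.mul k C.U).compl₁₂ C.U0.val.toLinearMap C.Up.val.toLinearMap)))

lemma trimap_bij : Function.Bijective C.trimap := C.triangular

lemma trimap_tmul (a : ↥C.Um) (t : ↥C.U0) (w : ↥C.Up) :
    C.trimap (a ⊗ₜ[k] ((t ⊗ₜ[k] w))) = (a : C.U) * ((t : C.U) * (w : C.U)) := rfl

lemma U_induction (P : C.U → Prop) (h0 : P 0) (hadd : ∀ x y, P x → P y → P (x + y))
    (hmul : ∀ (α ω : Fin θ → ℤ) (a : ↥C.Um) (t : ↥C.U0) (w : ↥C.Up),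
      (a : C.U) ∈ C.grade α → (w : C.U) ∈ C.grade ω →
      P ((a : C.U) * ((t : C.U) * (w : C.U)))) :
    ∀ x : C.U, P x := by
  intro x
  obtain ⟨z, rfl⟩ := C.trimap_bij.surjective x
  induction z using TensorProduct.induction_on with
  | zero => simpa using h0
  | add u v hu hv => rw [map_add]; exact hadd _ _ hu hv
  | tmul a y =>
    induction y using TensorProduct.induction_on with
    | zero => rw [TensorProduct.tmul_zero, map_zero]; exact h0
    | add y1 y2 hy1 hy2 => rw [TensorProduct.tmul_add, map_add]; exact hadd _ _ hy1 hy2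
    | tmul t w =>
      rw [C.trimap_tmul]
      obtain ⟨sa, hsa⟩ := prj_sum C.internal (a : C.U)
      obtain ⟨sw, hsw⟩ := prj_sum C.internal (w : C.U)
      rw [hsa, hsw, Finset.sum_mul]
      refine Finset.sum_induction _ _ (fun a b => hadd a b) h0 (fun α hα => ?_)
      rw [Finset.mul_sum, Finset.mul_sum]
      refine Finset.sum_induction _ _ (fun a b => hadd a b) h0 (fun ω hω => ?_)
      exact hmul α ω ⟨_, C.prU_mem_Um a.2 α⟩ t ⟨_, C.prU_mem_Up w.2 ω⟩
        (C.prU_mem _ _) (C.prU_mem _ _)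

end AJSCtx
end DevU

section DevM
variable {k : Type} [Field k] {θ : ℕ} {C : AJSCtx k θ}

lemma actVec_apply (A : CMod C) (v : A.M) (u : C.U) : actVec A v u = A.ρ u v := rfl

namespace CMod
variable (A : CMod C)

/-- projection onto the degree-`ν` component of `M` -/
noncomputable def prM (ν : Fin θ → ℤ) : A.M →ₗ[k] A.M := prj A.grM A.internal ν

lemma prM_mem (ν : Fin θ → ℤ) (m : A.M) : A.prM ν m ∈ A.grM ν := prj_mem _ _ _

lemma prM_of_mem {ν : Fin θ → ℤ} {m : A.M} (h : m ∈ A.grM ν) : A.prM ν m = m :=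
  prj_of_mem _ h

lemma prM_of_mem_ne {ν τ : Fin θ → ℤ} {m : A.M} (h : m ∈ A.grM τ) (hne : ν ≠ τ) :
    A.prM ν m = 0 := prj_of_mem_ne _ hne h

lemma prM_mem_of_graded {p : Submodule k A.M} (hp : A.gradedSub p) {m : A.M} (hm : m ∈ p)
    (ν : Fin θ → ℤ) : A.prM ν m ∈ p := prj_mem_of_graded A.internal hp hm ν

lemma gradedSub_iff_prM (p : Submodule k A.M) :
    A.gradedSub p ↔ ∀ m ∈ p, ∀ ν, A.prM ν m ∈ p := graded_iff_prj A.internal p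

/-- projections commute with the action on a homogeneous vector -/
lemma prM_act {μ : Fin θ → ℤ} {v : A.M} (hv : v ∈ A.grM μ) (ν : Fin θ → ℤ) (u : C.U) :
    A.prM ν (A.ρ u v) = A.ρ (C.prU (ν - μ) u) v := by
  have htop : u ∈ ⨆ τ, C.grade τ := by rw [C.internal.submodule_iSup_eq_top]; trivial
  induction htop using Submodule.iSup_induction' with
  | mem τ x hx =>
      rcases eq_or_ne (ν - μ) τ with he | hne
      · have h1 : C.prU (ν - μ) x = x := by rw [he]; exact C.prU_of_mem hx
        have h2 : A.ρ x v ∈ A.grM ν := by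
          have := A.act_graded τ μ x v hx hv
          have he2 : τ + μ = ν := by rw [← he]; abel
          rwa [he2] at this
        rw [h1, A.prM_of_mem h2]
      · have h1 : C.prU (ν - μ) x = 0 := C.prU_of_mem_ne hx hne
        have h2 : A.prM ν (A.ρ x v) = 0 := by
          refine A.prM_of_mem_ne (A.act_graded τ μ x v hx hv) ?_
          intro hc
          exact hne (by rw [hc]; abel)
        rw [h1, h2, map_zero, LinearMap.zero_apply]
  | zero => simp
  | add x y _ _ hx hy => simp only [map_add, LinearMap.add_apply, hx, hy]

lemma exists_hw (hA : ∃ m : A.M, m ≠ 0) :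
    ∃ (μ : Fin θ → ℤ) (v : A.M), v ≠ 0 ∧ IsHWvec A μ v := by
  have hind := A.internal.submodule_iSupIndep
  have hfin : {ν | A.grM ν ≠ ⊥}.Finite := Submodule.finite_ne_bot_of_iSupIndep hind
  obtain ⟨m, hm⟩ := hA
  obtain ⟨ν0, hν0⟩ := exists_prj_ne_zero A.internal hm
  have hne : {ν | A.grM ν ≠ ⊥}.Nonempty := by
    refine ⟨ν0, fun hb => hν0 ?_⟩
    have := prj_mem A.internal ν0 m
    rw [hb] at this
    simpa using this
  obtain ⟨μ, hμmem, hmax⟩ := Set.Finite.exists_maximalFor (fun ν => ∑ i, ν i) _ hfin hne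
  have hbig : ∀ τ : Fin θ → ℤ, 0 ≤ τ → τ ≠ 0 → A.grM (τ + μ) = ⊥ := by
    intro τ hτ hτ0
    by_contra hb
    have hpos : 0 < ∑ i, τ i := by
      refine Finset.sum_pos' (fun i _ => hτ i) ?_
      obtain ⟨i, hi⟩ := Function.ne_iff.1 hτ0
      exact ⟨i, Finset.mem_univ i, lt_of_le_of_ne (hτ i) (Ne.symm hi)⟩
    have h1 : (∑ i, μ i) ≤ ∑ i, (τ + μ) i := by
      have : ∑ i, (τ + μ) i = (∑ i, τ i) + ∑ i, μ i := by
        simp [Pi.add_apply, Finset.sum_add_distrib]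
      omega
    have h2 : ∑ i, (τ + μ) i ≤ ∑ i, μ i := hmax hb h1
    have h3 : ∑ i, (τ + μ) i = (∑ i, τ i) + ∑ i, μ i := by
      simp [Pi.add_apply, Finset.sum_add_distrib]
    omega
  obtain ⟨v, hvμ, hv0⟩ := (Submodule.ne_bot_iff _).1 hμmem
  refine ⟨μ, v, hv0, hvμ, ?_⟩
  intro ν hν u hu
  rcases eq_or_ne u 0 with rfl | hu0
  · simp
  · have hνpos : 0 ≤ ν := C.Up_pos ν ((Submodule.ne_bot_iff _).2 ⟨u, hu, hu0⟩)
    have := A.act_graded ν μ u v ((Submodule.mem_inf.1 hu).2) hvμ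
    rw [hbig ν hνpos hν] at this
    simpa using this

lemma gen_top (hA : A.IsSimpleObj) {μ : Fin θ → ℤ} {v : A.M} (hv : v ∈ A.grM μ)
    (h0 : v ≠ 0) : LinearMap.range (actVec A v) = ⊤ := by
  set p := LinearMap.range (actVec A v) with hp
  have hst : A.stable p := by
    rintro u m hm
    obtain ⟨u1, hu1⟩ := hm
    exact ⟨u * u1, by rw [actVec_apply, map_mul, Module.End.mul_apply, ← hu1]; rfl⟩
  have hgr : A.gradedSub p := by
    refine (A.gradedSub_iff_prM p).2 ?_
    rintro m ⟨u, rfl⟩ ν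
    rw [actVec_apply, A.prM_act hv ν u]
    exact ⟨_, rfl⟩
  rcases hA.2 p hgr hst with hbot | htop
  · exfalso
    have : v ∈ p := ⟨1, by rw [actVec_apply, map_one]; rfl⟩
    rw [hbot] at this
    exact h0 (by simpa using this)
  · exact htop

lemma act_into_neg {μ : Fin θ → ℤ} {v : A.M} (hw : IsHWvec A μ v) (u : C.U) :
    A.ρ u v ∈ LinearMap.range ((actVec A v) ∘ₗ C.Um.val.toLinearMap) := by
  refine C.U_induction (fun x => A.ρ x v ∈
    LinearMap.range ((actVec A v) ∘ₗ C.Um.val.toLinearMap)) ?_ ?_ ?_ u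
  · show A.ρ (0 : C.U) v ∈ _
    simp only [map_zero, LinearMap.zero_apply]
    exact Submodule.zero_mem _
  · intro x y hx hy
    show A.ρ (x + y) v ∈ _
    simp only [map_add, LinearMap.add_apply]
    exact Submodule.add_mem _ hx hy
  · intro α ω a t w ha hwω
    show A.ρ ((a : C.U) * ((t : C.U) * (w : C.U))) v ∈ _
    rw [map_mul, map_mul, Module.End.mul_apply, Module.End.mul_apply]
    rcases eq_or_ne ω 0 with rfl | hω
    · obtain ⟨c, hc⟩ := Submodule.mem_span_singleton.1
        (by rw [← C.Up_deg0]; exact Submodule.mem_inf.2 ⟨w.2, hwω⟩ :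
          (w : C.U) ∈ Submodule.span k {(1 : C.U)})
      rw [← hc, map_smul, LinearMap.smul_apply, map_one, Module.End.one_apply,
        map_smul, A.act_U0 t μ v hw.1, map_smul, map_smul]
      exact Submodule.smul_mem _ _ (Submodule.smul_mem _ _ ⟨a, rfl⟩)
    · rw [hw.2 ω hω (w : C.U) (Submodule.mem_inf.2 ⟨w.2, hwω⟩), map_zero, map_zero]
      exact Submodule.zero_mem _

lemma act_deg0_smul {μ : Fin θ → ℤ} {v : A.M} (hw : IsHWvec A μ v) {u : C.U}
    (hu : u ∈ C.grade 0) : ∃ c : k, A.ρ u v = c • v := by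
  obtain ⟨a, ha⟩ := A.act_into_neg hw u
  have hmem : A.ρ u v ∈ A.grM μ := by
    have := A.act_graded 0 μ u v hu hw.1
    rwa [zero_add] at this
  have h1 : A.ρ u v = A.ρ (C.prU 0 (a : C.U)) v := by
    have h2 : A.ρ u v = A.prM μ (A.ρ u v) := (A.prM_of_mem hmem).symm
    have h3 : A.ρ u v = A.ρ ((a : C.U)) v := by rw [← ha]; rfl
    rw [h2, h3, A.prM_act hw.1 μ _, sub_self]
  obtain ⟨c, hc⟩ := Submodule.mem_span_singleton.1 (C.prU_um_mem_span a.2)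
  refine ⟨c, ?_⟩
  rw [h1, ← hc, map_smul, LinearMap.smul_apply, map_one, Module.End.one_apply]

end CMod
end DevM

section DevP
variable {k : Type} [Field k] {θ : ℕ} {C : AJSCtx k θ}

/-- the product of two objects of `C_k` -/
noncomputable def prodC (A B : CMod C) : CMod C where
  M := A.M × B.M
  acg := inferInstance
  modk := inferInstance
  ρ := AlgHom.ofLinearMap
    { toFun := fun u => (A.ρ u).prodMap (B.ρ u)
      map_add' := fun x y => LinearMap.ext fun m => by
        simp [LinearMap.prodMap_apply, map_add]
      map_smul' := fun c x => LinearMap.ext fun m => by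
        simp [LinearMap.prodMap_apply, map_smul] }
    (LinearMap.ext fun m => by simp [LinearMap.prodMap_apply])
    (fun x y => LinearMap.ext fun m => by
      simp [LinearMap.prodMap_apply, map_mul, Module.End.mul_apply])
  grM := fun ν => (A.grM ν).prod (B.grM ν)
  internal := by
    rw [DirectSum.isInternal_submodule_iff_iSupIndep_and_iSup_eq_top]
    constructor
    · intro i
      rw [disjoint_iff_inf_le]
      rintro ⟨x1, x2⟩ ⟨hx, hx'⟩
      have hle : (⨆ j, ⨆ (_ : j ≠ i), (A.grM j).prod (B.grM j)) ≤
          (⨆ j, ⨆ (_ : j ≠ i), A.grM j).prod (⨆ j, ⨆ (_ : j ≠ i), B.grM j) := by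
        refine iSup_le fun j => iSup_le fun hj => ?_
        exact Submodule.prod_mono (le_iSup₂ (f := fun j _ => A.grM j) j hj)
          (le_iSup₂ (f := fun j _ => B.grM j) j hj)
      have hx2 := hle hx'
      have hA := A.internal.submodule_iSupIndep i
      have hB := B.internal.submodule_iSupIndep i
      have e1 : x1 = 0 := Submodule.disjoint_def.1 hA x1 hx.1 (Submodule.mem_prod.1 hx2).1
      have e2 : x2 = 0 := Submodule.disjoint_def.1 hB x2 hx.2 (Submodule.mem_prod.1 hx2).2
      simp [e1, e2]
    · rw [Submodule.eq_top_iff']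
      intro x
      have h1 : ∀ m : A.M, ((m, (0:B.M)) : A.M × B.M) ∈ ⨆ ν, (A.grM ν).prod (B.grM ν) := by
        intro m
        have hm : m ∈ ⨆ ν, A.grM ν := by rw [A.internal.submodule_iSup_eq_top]; trivial
        induction hm using Submodule.iSup_induction' with
        | mem ν y hy =>
            exact Submodule.mem_iSup_of_mem ν (Submodule.mem_prod.2 ⟨hy, Submodule.zero_mem _⟩)
        | zero => exact Submodule.zero_mem _
        | add y z _ _ hy hz => simpa using Submodule.add_mem _ hy hz
      have h2 : ∀ m : B.M, (((0:A.M), m) : A.M × B.M) ∈ ⨆ ν, (A.grM ν).prod (B.grM ν) := by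
        intro m
        have hm : m ∈ ⨆ ν, B.grM ν := by rw [B.internal.submodule_iSup_eq_top]; trivial
        induction hm using Submodule.iSup_induction' with
        | mem ν y hy =>
            exact Submodule.mem_iSup_of_mem ν (Submodule.mem_prod.2 ⟨Submodule.zero_mem _, hy⟩)
        | zero => exact Submodule.zero_mem _
        | add y z _ _ hy hz => simpa using Submodule.add_mem _ hy hz
      have : x = (x.1, (0:B.M)) + ((0:A.M), x.2) := by simp
      rw [this]
      exact Submodule.add_mem _ (h1 x.1) (h2 x.2)
  fin := inferInstance
  act_graded := by
    rintro ν μ u ⟨m1, m2⟩ hu hm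
    exact Submodule.mem_prod.2 ⟨A.act_graded ν μ u m1 hu (Submodule.mem_prod.1 hm).1,
      B.act_graded ν μ u m2 hu (Submodule.mem_prod.1 hm).2⟩
  act_U0 := by
    rintro s μ ⟨m1, m2⟩ hm
    have e1 := A.act_U0 s μ m1 (Submodule.mem_prod.1 hm).1
    have e2 := B.act_U0 s μ m2 (Submodule.mem_prod.1 hm).2
    show ((A.ρ (s:C.U)).prodMap (B.ρ (s:C.U))) (m1, m2) = _
    rw [LinearMap.prodMap_apply, e1, e2]
    rfl

lemma prodC_ρ_apply (A B : CMod C) (u : C.U) (m : A.M) (m' : B.M) :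
    (prodC A B).ρ u (⟨m, m'⟩ : A.M × B.M) = (⟨A.ρ u m, B.ρ u m'⟩ : A.M × B.M) := rfl

lemma prodC_hw {A B : CMod C} {μ : Fin θ → ℤ} {v : A.M} {v' : B.M}
    (hv : IsHWvec A μ v) (hv' : IsHWvec B μ v') :
    IsHWvec (prodC A B) μ (⟨v, v'⟩ : A.M × B.M) := by
  constructor
  · exact Submodule.mem_prod.2 ⟨hv.1, hv'.1⟩
  · intro ν hν u hu
    rw [prodC_ρ_apply, hv.2 ν hν u hu, hv'.2 ν hν u hu]
    rfl

lemma ann_le {L L' : CMod C} {μ : Fin θ → ℤ} {v : L.M} {v' : L'.M}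
    (hL' : L'.IsSimpleObj) (hv : IsHWvec L μ v) (hv' : IsHWvec L' μ v')
    (hv0 : v ≠ 0) : ∀ u : C.U, L.ρ u v = 0 → L'.ρ u v' = 0 := by
  set NL' : Submodule k L'.M :=
    Submodule.map (actVec L' v') (LinearMap.ker (actVec L v)) with hNL'
  have hst : L'.stable NL' := by
    rintro u m' hm'
    obtain ⟨u1, hu1, rfl⟩ := hm'
    refine ⟨u * u1, ?_, ?_⟩
    · simp only [SetLike.mem_coe, LinearMap.mem_ker, actVec_apply] at hu1 ⊢
      rw [map_mul, Module.End.mul_apply, hu1, map_zero]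
    · rw [actVec_apply, actVec_apply, map_mul, Module.End.mul_apply]
  have hgr : L'.gradedSub NL' := by
    refine (L'.gradedSub_iff_prM NL').2 ?_
    rintro m' hm' ν
    obtain ⟨u1, hu1, rfl⟩ := hm'
    refine ⟨C.prU (ν - μ) u1, ?_, ?_⟩
    · simp only [SetLike.mem_coe, LinearMap.mem_ker, actVec_apply] at hu1 ⊢
      rw [← L.prM_act hv.1 ν u1, hu1, map_zero]
    · rw [actVec_apply, actVec_apply, ← L'.prM_act hv'.1 ν u1]
  intro u hu
  by_contra hne
  have hmem : L'.ρ u v' ∈ NL' :=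
    ⟨u, by simp only [SetLike.mem_coe, LinearMap.mem_ker, actVec_apply]; exact hu, rfl⟩
  have hNbot : NL' ≠ ⊥ := by
    intro hb
    rw [hb] at hmem
    exact hne (by simpa using hmem)
  have hNtop := (hL'.2 NL' hgr hst).resolve_left hNbot
  have hv'mem : v' ∈ NL' := by rw [hNtop]; trivial
  obtain ⟨u1, hk1, hu1⟩ := hv'mem
  simp only [SetLike.mem_coe, LinearMap.mem_ker, actVec_apply] at hk1
  rw [actVec_apply] at hu1
  set u0 := C.prU 0 u1 with hu0
  have h1 : L.ρ u0 v = 0 := by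
    have := L.prM_act hv.1 μ u1
    rw [sub_self] at this
    rw [hu0, ← this, hk1, map_zero]
  have h2 : L'.ρ u0 v' = v' := by
    have := L'.prM_act hv'.1 μ u1
    rw [sub_self] at this
    rw [hu0, ← this, hu1, L'.prM_of_mem hv'.1]
  obtain ⟨c, hc⟩ := (prodC L L').act_deg0_smul (prodC_hw hv hv') (C.prU_mem 0 u1)
  rw [prodC_ρ_apply, h1, h2] at hc
  have hc1 : (0 : L.M) = c • v := congrArg Prod.fst hc
  have hc2 : v' = c • v' := congrArg Prod.snd hc
  rcases smul_eq_zero.1 hc1.symm with h | h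
  · rw [h, zero_smul] at hc2
    exact hne (by rw [hc2, map_zero])
  · exact absurd h hv0

end DevP

section DevIso
variable {k : Type} [Field k] {θ : ℕ} {C : AJSCtx k θ}

lemma ciso_of_hw {L L' : CMod C} (hL : L.IsSimpleObj) (hL' : L'.IsSimpleObj)
    {μ : Fin θ → ℤ} {v : L.M} {v' : L'.M} (hv0 : v ≠ 0) (hv'0 : v' ≠ 0)
    (hv : IsHWvec L μ v) (hv' : IsHWvec L' μ v') : CIso L L' := by
  have hann := ann_le hL' hv hv' hv0
  have hann' := ann_le hL hv' hv hv'0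
  have hsur : LinearMap.range (actVec L v) = ⊤ := L.gen_top hL hv.1 hv0
  have hsur' : LinearMap.range (actVec L' v') = ⊤ := L'.gen_top hL' hv'.1 hv'0
  have hsurj := LinearMap.range_eq_top.1 hsur
  have hsurj' := LinearMap.range_eq_top.1 hsur'
  have hker : LinearMap.ker (actVec L v) ≤ LinearMap.ker (actVec L' v') := by
    intro u hu
    rw [LinearMap.mem_ker, actVec_apply] at hu ⊢
    exact hann u hu
  set e := LinearMap.quotKerEquivOfSurjective (actVec L v) hsurj with he
  set f : L.M →ₗ[k] L'.M :=
    (Submodule.liftQ _ (actVec L' v') hker) ∘ₗ e.symm.toLinearMap with hf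
  have hfa : ∀ u : C.U, f (L.ρ u v) = L'.ρ u v' := by
    intro u
    have h1 : e (Submodule.Quotient.mk u) = L.ρ u v := rfl
    have h2 : e.symm (L.ρ u v) = Submodule.Quotient.mk u := by
      rw [← h1, LinearEquiv.symm_apply_apply]
    rw [hf]
    show Submodule.liftQ _ (actVec L' v') hker (e.symm (L.ρ u v)) = _
    rw [h2, Submodule.liftQ_apply, actVec_apply]
  have hsurf : Function.Surjective f := by
    intro m'
    obtain ⟨u, hu⟩ := hsurj' m'
    exact ⟨L.ρ u v, by rw [hfa u, ← actVec_apply, hu]⟩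
  have hinjf : Function.Injective f := by
    rw [← LinearMap.ker_eq_bot]
    rw [eq_bot_iff]
    intro m hm
    rw [LinearMap.mem_ker] at hm
    obtain ⟨u, hu⟩ := hsurj m
    rw [actVec_apply] at hu
    rw [← hu, hfa u] at hm
    rw [← hu]
    rw [hann' u hm]
    rfl
  refine ⟨f, ⟨?_, ?_⟩, hinjf, hsurf⟩
  · intro u m
    obtain ⟨u1, hu1⟩ := hsurj m
    rw [actVec_apply] at hu1
    rw [← hu1, ← Module.End.mul_apply, ← map_mul, hfa, hfa, map_mul, Module.End.mul_apply]
  · intro ν m hm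
    obtain ⟨u, hu⟩ := hsurj m
    rw [actVec_apply] at hu
    have h1 : m = L.ρ (C.prU (ν - μ) u) v := by
      rw [← L.prM_act hv.1 ν u, hu, L.prM_of_mem hm]
    rw [h1, hfa, ← L'.prM_act hv'.1 ν u]
    exact L'.prM_mem ν _

/-- in a simple module generated by a h.w. vector of weight `μ`, all weights are `≤ μ` -/
lemma weight_le {L : CMod C} (hL : L.IsSimpleObj) {μ ν : Fin θ → ℤ} {v : L.M}
    (hv0 : v ≠ 0) (hv : IsHWvec L μ v) {m : L.M} (hm : m ∈ L.grM ν) (hm0 : m ≠ 0) :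
    ν ≤ μ := by
  have hsurj := LinearMap.range_eq_top.1 (L.gen_top hL hv.1 hv0)
  obtain ⟨u, hu⟩ := hsurj m
  rw [actVec_apply] at hu
  obtain ⟨a, ha⟩ := L.act_into_neg hv u
  have ha' : L.ρ ((a : C.U)) v = m := by rw [← hu, ← ha]; rfl
  have h1 : m = L.ρ (C.prU (ν - μ) (a : C.U)) v := by
    rw [← L.prM_act hv.1 ν _, ha', L.prM_of_mem hm]
  have hne : C.prU (ν - μ) (a : C.U) ≠ 0 := by
    intro hz
    rw [hz, map_zero] at h1
    exact hm0 (by rw [h1]; rfl)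
  have hle : ν - μ ≤ 0 :=
    C.Um_homog_le (C.prU_mem_Um a.2 _) (C.prU_mem _ _) hne
  exact sub_nonpos.1 hle

/-- a `C`-isomorphism maps the `ν`-component into the `ν`-component bijectively;
in particular nonzero homogeneous vectors go to nonzero homogeneous vectors -/
lemma ciso_weight {L L' : CMod C} (f : L.M →ₗ[k] L'.M) (hc : IsCHom L L' f)
    (hb : Function.Bijective f) {ν : Fin θ → ℤ} {m : L.M} (hm : m ∈ L.grM ν) (hm0 : m ≠ 0) :
    f m ∈ L'.grM ν ∧ f m ≠ 0 :=
  ⟨hc.2 ν m hm, fun h => hm0 (hb.1 (by rw [h, map_zero]))⟩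

end DevIso

section DevV
variable {k : Type} [Field k] {θ : ℕ}

namespace AJSCtx
variable (C : AJSCtx k θ) (μ : Fin θ → ℤ)

lemma coeUm_smul (c : k) (a : ↥C.Um) : ((c • a : ↥C.Um) : C.U) = c • (a : C.U) := rfl
lemma coeUm_zero : ((0 : ↥C.Um) : C.U) = 0 := rfl
lemma coeUm_add (a b : ↥C.Um) : ((a + b : ↥C.Um) : C.U) = (a : C.U) + (b : C.U) := rfl
lemma coeU0_mul (a b : ↥C.U0) : ((a * b : ↥C.U0) : C.U) = (a : C.U) * (b : C.U) := rfl
lemma coeUp_mul (a b : ↥C.Up) : ((a * b : ↥C.Up) : C.U) = (a : C.U) * (b : C.U) := rfl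

/-- the character of `U⁰ ⊗ U⁺` attached to `μ` -/
noncomputable def chi0 : ↥C.U0 ⊗[k] ↥C.Up →ₗ[k] k :=
  TensorProduct.lift (LinearMap.mk₂ k (fun t w => C.π ((C.tilde μ) t) * C.epsU w)
    (fun t t' w => by simp [map_add, add_mul])
    (fun c t w => by simp [map_smul, smul_eq_mul, mul_assoc])
    (fun t w w' => by simp [map_add, mul_add])
    (fun c t w => by simp [map_smul, smul_eq_mul, mul_left_comm]))

lemma chi0_tmul (t : ↥C.U0) (w : ↥C.Up) :
    C.chi0 μ (t ⊗ₜ[k] w) = C.π ((C.tilde μ) t) * C.epsU w := by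
  rw [chi0, TensorProduct.lift.tmul]
  rfl

/-- the auxiliary projection `U⁻ ⊗ U⁰ ⊗ U⁺ → U⁻` -/
noncomputable def phiV : ↥C.Um ⊗[k] (↥C.U0 ⊗[k] ↥C.Up) →ₗ[k] ↥C.Um :=
  TensorProduct.lift (LinearMap.mk₂ k (fun a y => (C.chi0 μ y) • a)
    (fun a a' y => by simp [smul_add])
    (fun c a y => smul_comm _ _ _)
    (fun a y y' => by simp [map_add, add_smul])
    (fun c a y => by simp [map_smul, smul_eq_mul, mul_smul]))

/-- the projection `U → U⁻` defining the Verma module of weight `μ` -/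
noncomputable def PhiV : C.U →ₗ[k] ↥C.Um :=
  (C.phiV μ) ∘ₗ (LinearEquiv.ofBijective C.trimap C.trimap_bij).symm.toLinearMap

lemma PhiV_mul (a : ↥C.Um) (t : ↥C.U0) (w : ↥C.Up) :
    C.PhiV μ ((a : C.U) * ((t : C.U) * (w : C.U))) =
      (C.π ((C.tilde μ) t) * C.epsU w) • a := by
  rw [← C.trimap_tmul]
  show C.phiV μ ((LinearEquiv.ofBijective C.trimap C.trimap_bij).symm
    ((LinearEquiv.ofBijective C.trimap C.trimap_bij) (a ⊗ₜ[k] (t ⊗ₜ[k] w)))) = _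
  rw [LinearEquiv.symm_apply_apply]
  show (C.chi0 μ (t ⊗ₜ[k] w)) • a = _
  rw [chi0_tmul]

lemma PhiV_Um (a : ↥C.Um) : C.PhiV μ (a : C.U) = a := by
  have h : (a : C.U) = (a : C.U) * (((1 : ↥C.U0) : C.U) * ((1 : ↥C.Up) : C.U)) := by
    simp
  rw [h, C.PhiV_mul, map_one, map_one, C.epsU_one, mul_one, one_smul]

lemma PhiV_prU (x : C.U) (τ : Fin θ → ℤ) :
    ((C.PhiV μ (C.prU τ x) : C.U)) = C.prU τ ((C.PhiV μ x : C.U)) := by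
  refine C.U_induction (fun x => ∀ τ, ((C.PhiV μ (C.prU τ x) : C.U)) =
    C.prU τ ((C.PhiV μ x : C.U))) ?_ ?_ ?_ x τ
  · intro τ; simp [C.coeUm_zero]
  · intro x y hx hy τ
    rw [map_add, map_add, C.coeUm_add, map_add, C.coeUm_add, map_add, hx τ, hy τ]
  · intro α ω a t w ha hw τ
    have ht : (t : C.U) ∈ C.grade 0 := C.U0_deg0 t.2
    have hprod : (a : C.U) * ((t : C.U) * (w : C.U)) ∈ C.grade (α + (0 + ω)) :=
      C.mul_mem ha (C.mul_mem ht hw)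
    rw [C.PhiV_mul]
    rcases eq_or_ne ω 0 with rfl | hω
    · rcases eq_or_ne τ (α + (0 + 0)) with rfl | hτ
      · rw [C.prU_of_mem hprod, C.PhiV_mul, C.coeUm_smul]
        have haτ : (a : C.U) ∈ C.grade (α + (0 + 0)) := by simpa using ha
        exact (C.prU_of_mem (Submodule.smul_mem _ _ haτ)).symm
      · rw [C.prU_of_mem_ne hprod hτ, map_zero, C.coeUm_zero, C.coeUm_smul,
          map_smul, C.prU_of_mem_ne ha (by simpa using hτ), smul_zero]
    · have hε : C.epsU w = 0 := C.epsU_eq_zero (C.prU_of_mem_ne hw (Ne.symm hω))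
      rw [hε, mul_zero, zero_smul]
      rcases eq_or_ne τ (α + (0 + ω)) with rfl | hτ
      · rw [C.prU_of_mem hprod, C.PhiV_mul, hε, mul_zero, zero_smul, C.coeUm_zero,
          map_zero]
      · rw [C.prU_of_mem_ne hprod hτ, map_zero, C.coeUm_zero, map_zero]

lemma PhiV_grade {τ : Fin θ → ℤ} {x : C.U} (hx : x ∈ C.grade τ) :
    ((C.PhiV μ x : C.U)) ∈ C.grade τ := by
  have h := C.PhiV_prU μ x τ
  rw [C.prU_of_mem hx] at h
  rw [h]
  exact C.prU_mem τ _

/-- the defining left ideal of the Verma module -/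
noncomputable def JV : Submodule k C.U :=
  Submodule.span k
    ({y | ∃ (x : C.U) (s : ↥C.U0), y = x * ((s : C.U) - C.π ((C.tilde μ) s) • (1 : C.U))} ∪
     {y | ∃ (x : C.U) (p : ↥C.Up), C.prU 0 (p : C.U) = 0 ∧ y = x * (p : C.U)})

lemma JV_mul_left (u : C.U) {y : C.U} (hy : y ∈ C.JV μ) : u * y ∈ C.JV μ := by
  induction hy using Submodule.span_induction with
  | mem y hmem =>
      rcases hmem with ⟨x, s, rfl⟩ | ⟨x, p, hp, rfl⟩
      · rw [← mul_assoc]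
        exact Submodule.subset_span (Or.inl ⟨u * x, s, rfl⟩)
      · rw [← mul_assoc]
        exact Submodule.subset_span (Or.inr ⟨u * x, p, hp, rfl⟩)
  | zero => rw [mul_zero]; exact Submodule.zero_mem _
  | add a b _ _ ha hb => rw [mul_add]; exact Submodule.add_mem _ ha hb
  | smul c a _ ha => rw [mul_smul_comm]; exact Submodule.smul_mem _ _ ha

lemma prU_zero_mul {w p : ↥C.Up} (hp : C.prU 0 (p : C.U) = 0) :
    C.prU 0 ((w : C.U) * (p : C.U)) = 0 := by
  obtain ⟨sw, hsw⟩ := prj_sum C.internal (w : C.U)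
  obtain ⟨sp, hsp⟩ := prj_sum C.internal (p : C.U)
  rw [hsw, hsp, Finset.sum_mul, map_sum]
  refine Finset.sum_eq_zero fun α hα => ?_
  rw [Finset.mul_sum, map_sum]
  refine Finset.sum_eq_zero fun β hβ => ?_
  by_cases hwα : prj C.grade C.internal α (w : C.U) = 0
  · rw [hwα, zero_mul, map_zero]
  by_cases hpβ : prj C.grade C.internal β (p : C.U) = 0
  · rw [hpβ, mul_zero, map_zero]
  have h0α : 0 ≤ α := C.Up_homog_le (C.prU_mem_Up w.2 α) (C.prU_mem α _) hwα
  have h0β : 0 ≤ β := C.Up_homog_le (C.prU_mem_Up p.2 β) (C.prU_mem β _) hpβ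
  have hmem : prj C.grade C.internal α (w : C.U) * prj C.grade C.internal β (p : C.U) ∈
      C.grade (α + β) := C.mul_mem (C.prU_mem α _) (C.prU_mem β _)
  have hαβ : α + β ≠ 0 := by
    intro hz
    obtain ⟨hα0, hβ0⟩ := (add_eq_zero_iff_of_nonneg h0α h0β).1 hz
    exact hpβ (by rw [hβ0]; exact hp)
  exact C.prU_of_mem_ne hmem (Ne.symm hαβ)

lemma PhiV_JV {y : C.U} (hy : y ∈ C.JV μ) : C.PhiV μ y = 0 := by
  induction hy using Submodule.span_induction with
  | mem y hmem =>
      rcases hmem with ⟨x, s, rfl⟩ | ⟨x, p, hp, rfl⟩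
      · refine C.U_induction (fun x => C.PhiV μ (x * ((s : C.U) -
          C.π ((C.tilde μ) s) • (1 : C.U))) = 0) (by simp) ?_ ?_ x
        · intro a b ha hb
          show C.PhiV μ ((a + b) * _) = 0
          rw [add_mul, map_add]
          rw [ha, hb, add_zero]
        · intro α ω a t w ha hw
          show C.PhiV μ (((a : C.U) * ((t : C.U) * (w : C.U))) * _) = 0
          have hws : (w : C.U) * (s : C.U) =
              ((((C.tilde ω).symm s : ↥C.U0) : C.U)) * (w : C.U) := by
            have h2 := C.tilde_comm ω (w : C.U) hw ((C.tilde ω).symm s)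
            rw [h2, AlgEquiv.apply_symm_apply]
          have hexp : ((a : C.U) * ((t : C.U) * (w : C.U))) *
              ((s : C.U) - C.π ((C.tilde μ) s) • (1 : C.U)) =
              (a : C.U) * (((t * ((C.tilde ω).symm s) : ↥C.U0) : C.U) * (w : C.U)) -
              C.π ((C.tilde μ) s) • ((a : C.U) * ((t : C.U) * (w : C.U))) := by
            rw [mul_sub, mul_smul_comm, mul_one]
            congr 1
            rw [mul_assoc ((a : C.U)) ((t : C.U) * (w : C.U)) ((s : C.U)),
              mul_assoc ((t : C.U)) ((w : C.U)) ((s : C.U)), hws, C.coeU0_mul,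
              mul_assoc ((t : C.U)) _ ((w : C.U))]
          rw [hexp, map_sub, C.PhiV_mul, map_smul, C.PhiV_mul]
          rcases eq_or_ne ω 0 with rfl | hω
          · have hs : (C.tilde (0 : Fin θ → ℤ)).symm s = s := by
              rw [C.tilde_zero]; rfl
            rw [hs, map_mul, map_mul, smul_smul, sub_eq_zero]
            congr 1
            ring
          · have hε : C.epsU w = 0 := C.epsU_eq_zero (C.prU_of_mem_ne hw (Ne.symm hω))
            rw [hε, mul_zero, zero_smul, mul_zero, zero_smul, smul_zero, sub_zero]
      · refine C.U_induction (fun x => C.PhiV μ (x * (p : C.U)) = 0) (by simp) ?_ ?_ x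
        · intro a b ha hb
          show C.PhiV μ ((a + b) * _) = 0
          rw [add_mul, map_add, ha, hb, add_zero]
        · intro α ω a t w ha hw
          show C.PhiV μ (((a : C.U) * ((t : C.U) * (w : C.U))) * (p : C.U)) = 0
          have hexp : ((a : C.U) * ((t : C.U) * (w : C.U))) * (p : C.U) =
              (a : C.U) * ((t : C.U) * (((w * p : ↥C.Up) : C.U))) := by
            rw [C.coeUp_mul, mul_assoc ((a : C.U)), mul_assoc ((t : C.U))]
          rw [hexp, C.PhiV_mul]
          have hε : C.epsU (w * p) = 0 := by
            refine C.epsU_eq_zero ?_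
            rw [C.coeUp_mul]
            exact C.prU_zero_mul hp
          rw [hε, mul_zero, zero_smul]
  | zero => rw [map_zero]
  | add a b _ _ ha hb => rw [map_add, ha, hb, add_zero]
  | smul c a _ ha => rw [map_smul, ha, smul_zero]

lemma sub_PhiV_mem_JV (y : C.U) : y - ((C.PhiV μ y : C.U)) ∈ C.JV μ := by
  refine C.U_induction (fun y => y - ((C.PhiV μ y : C.U)) ∈ C.JV μ) (by simp [C.coeUm_zero]) ?_ ?_ y
  · intro a b ha hb
    have h3 : a + b - ((C.PhiV μ (a + b) : C.U)) =
        (a - ((C.PhiV μ a : C.U))) + (b - ((C.PhiV μ b : C.U))) := by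
      rw [map_add, C.coeUm_add]
      abel
    rw [h3]
    exact Submodule.add_mem _ ha hb
  · intro α ω a t w ha hw
    show (a : C.U) * ((t : C.U) * (w : C.U)) -
      ((C.PhiV μ ((a : C.U) * ((t : C.U) * (w : C.U))) : C.U)) ∈ C.JV μ
    rcases eq_or_ne ω 0 with rfl | hω
    · have hw1 : (w : C.U) = C.epsU w • (1 : C.U) := by
        rw [← C.epsU_spec, C.prU_of_mem hw]
      have hexp : (a : C.U) * ((t : C.U) * (w : C.U)) =
          C.epsU w • ((a : C.U) * (t : C.U)) := by
        rw [hw1, mul_smul_comm, mul_one, mul_smul_comm]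
      rw [C.PhiV_mul, hexp, C.coeUm_smul]
      have h4 : C.epsU w • ((a : C.U) * (t : C.U)) -
          (C.π ((C.tilde μ) t) * C.epsU w) • (a : C.U) =
          C.epsU w • ((a : C.U) * ((t : C.U) - C.π ((C.tilde μ) t) • (1 : C.U))) := by
        rw [mul_sub, mul_smul_comm, mul_one, smul_sub, smul_smul,
          mul_comm (C.epsU w) (C.π ((C.tilde μ) t))]
      rw [h4]
      exact Submodule.smul_mem _ _
        (Submodule.subset_span (Or.inl ⟨(a : C.U), t, rfl⟩))
    · have hε : C.epsU w = 0 := C.epsU_eq_zero (C.prU_of_mem_ne hw (Ne.symm hω))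
      rw [C.PhiV_mul, hε, mul_zero, zero_smul, C.coeUm_zero, sub_zero, ← mul_assoc]
      exact Submodule.subset_span
        (Or.inr ⟨(a : C.U) * (t : C.U), w, C.prU_of_mem_ne hw (Ne.symm hω), rfl⟩)

lemma PhiV_key (u y : C.U) : C.PhiV μ (u * y) = C.PhiV μ (u * ((C.PhiV μ y : C.U))) := by
  have h1 : u * y - u * ((C.PhiV μ y : C.U)) = u * (y - ((C.PhiV μ y : C.U))) := by
    rw [mul_sub]
  have h2 : C.PhiV μ (u * y - u * ((C.PhiV μ y : C.U))) = 0 := by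
    rw [h1]
    exact C.PhiV_JV μ (C.JV_mul_left μ u (C.sub_PhiV_mem_JV μ y))
  rw [map_sub] at h2
  rw [← sub_eq_zero]
  exact h2

end AJSCtx
end DevV

section DevV2
variable {k : Type} [Field k] {θ : ℕ}

namespace AJSCtx
variable (C : AJSCtx k θ) (μ : Fin θ → ℤ)

noncomputable def rhoVlin : C.U →ₗ[k] (↥C.Um →ₗ[k] ↥C.Um) where
  toFun u := (C.PhiV μ) ∘ₗ ((LinearMap.mulLeft k u) ∘ₗ C.Um.val.toLinearMap)
  map_add' x y := by
    refine LinearMap.ext fun m => ?_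
    show C.PhiV μ ((x + y) * (m : C.U)) = C.PhiV μ (x * (m : C.U)) + C.PhiV μ (y * (m : C.U))
    rw [add_mul, map_add]
  map_smul' c x := by
    refine LinearMap.ext fun m => ?_
    show C.PhiV μ ((c • x) * (m : C.U)) = c • C.PhiV μ (x * (m : C.U))
    rw [smul_mul_assoc, map_smul]

noncomputable def rhoV : C.U →ₐ[k] Module.End k ↥C.Um :=
  AlgHom.ofLinearMap (C.rhoVlin μ)
    (by
      refine LinearMap.ext fun m => ?_
      show C.PhiV μ ((1 : C.U) * (m : C.U)) = m
      rw [one_mul, C.PhiV_Um])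
    (fun x y => by
      refine LinearMap.ext fun m => ?_
      show C.PhiV μ ((x * y) * (m : C.U)) =
        C.PhiV μ (x * ((C.PhiV μ (y * (m : C.U)) : C.U)))
      rw [mul_assoc, C.PhiV_key])

lemma rhoV_apply (u : C.U) (m : ↥C.Um) :
    C.rhoV μ u m = C.PhiV μ (u * (m : C.U)) := rfl

/-- the grading of the Verma module -/
noncomputable def grV (ν : Fin θ → ℤ) : Submodule k ↥C.Um :=
  Submodule.comap C.Um.val.toLinearMap (C.grade (ν - μ))

lemma mem_grV {ν : Fin θ → ℤ} {m : ↥C.Um} :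
    m ∈ C.grV μ ν ↔ (m : C.U) ∈ C.grade (ν - μ) := Iff.rfl

lemma range_val : LinearMap.range C.Um.val.toLinearMap = Subalgebra.toSubmodule C.Um := by
  ext x
  constructor
  · rintro ⟨a, rfl⟩; exact a.2
  · intro hx; exact ⟨⟨x, hx⟩, rfl⟩

lemma grV_internal : DirectSum.IsInternal (C.grV μ) := by
  rw [DirectSum.isInternal_submodule_iff_iSupIndep_and_iSup_eq_top]
  constructor
  · intro ν
    rw [disjoint_iff_inf_le]
    rintro x ⟨hx1, hx2⟩
    have hmap : (x : C.U) ∈ ⨆ τ, ⨆ (_ : τ ≠ ν), C.grade (τ - μ) := by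
      have h2 : Submodule.map C.Um.val.toLinearMap (⨆ τ, ⨆ (_ : τ ≠ ν), C.grV μ τ) ≤
          ⨆ τ, ⨆ (_ : τ ≠ ν), C.grade (τ - μ) := by
        rw [Submodule.map_iSup]
        refine iSup_le fun τ => ?_
        rw [Submodule.map_iSup]
        refine iSup_le fun hτ => ?_
        refine le_trans (Submodule.map_comap_le _ _) ?_
        exact le_iSup₂ (f := fun τ _ => C.grade (τ - μ)) τ hτ
      exact h2 ⟨x, hx2, rfl⟩
    have hle2 : (⨆ τ, ⨆ (_ : τ ≠ ν), C.grade (τ - μ)) ≤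
        ⨆ σ, ⨆ (_ : σ ≠ ν - μ), C.grade σ := by
      refine iSup_le fun τ => iSup_le fun hτ => ?_
      refine le_iSup₂ (f := fun σ _ => C.grade σ) (τ - μ) ?_
      intro h
      exact hτ (by have := congrArg (fun z => z + μ) h; simpa using this)
    have hdis := C.internal.submodule_iSupIndep (ν - μ)
    have hz := Submodule.disjoint_def.1 hdis (x : C.U) hx1 (hle2 hmap)
    exact Subtype.ext hz
  · apply Submodule.map_injective_of_injective
      (show Function.Injective C.Um.val.toLinearMap from Subtype.val_injective)
    rw [Submodule.map_iSup, Submodule.map_top, C.range_val]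
    have h1 : ∀ ν, Submodule.map C.Um.val.toLinearMap (C.grV μ ν) =
        Subalgebra.toSubmodule C.Um ⊓ C.grade (ν - μ) := by
      intro ν
      rw [grV, Submodule.map_comap_eq, C.range_val]
    have h2 : (⨆ ν, Submodule.map C.Um.val.toLinearMap (C.grV μ ν)) =
        ⨆ σ, Subalgebra.toSubmodule C.Um ⊓ C.grade σ := by
      refine le_antisymm (iSup_le fun ν => ?_) (iSup_le fun σ => ?_)
      · rw [h1]
        exact le_iSup (fun σ => Subalgebra.toSubmodule C.Um ⊓ C.grade σ) (ν - μ)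
      · have h3 := h1 (σ + μ)
        rw [add_sub_cancel_right] at h3
        rw [← h3]
        exact le_iSup (fun ν => Submodule.map C.Um.val.toLinearMap (C.grV μ ν)) (σ + μ)
    rw [h2, ← C.Um_graded]

/-- the Verma module `Z(μ)` -/
noncomputable def vermaC : CMod C where
  M := ↥C.Um
  acg := inferInstance
  modk := inferInstance
  ρ := C.rhoV μ
  grM := C.grV μ
  internal := C.grV_internal μ
  fin := C.finUm
  act_graded := by
    intro ν' ν u m hu hm
    show C.PhiV μ (u * (m : C.U)) ∈ C.grV μ (ν' + ν)
    rw [mem_grV]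
    have h := C.PhiV_grade μ (C.mul_mem hu ((C.mem_grV μ).1 hm))
    have he : ν' + (ν - μ) = ν' + ν - μ := by abel
    rwa [he] at h
  act_U0 := by
    intro s ν m hm
    show C.PhiV μ ((s : C.U) * (m : C.U)) = _
    have hcomm := C.tilde_comm (ν - μ) (m : C.U) ((C.mem_grV μ).1 hm) s
    rw [hcomm]
    have h1 : (m : C.U) * (((C.tilde (ν - μ)) s : C.U)) =
        (m : C.U) * ((((C.tilde (ν - μ)) s : ↥C.U0) : C.U) * ((1 : ↥C.Up) : C.U)) := by
      rw [show ((1 : ↥C.Up) : C.U) = 1 from rfl, mul_one]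
    rw [h1, C.PhiV_mul, C.epsU_one, mul_one]
    congr 2
    have h2 := C.tilde_add (ν - μ) μ
    rw [sub_add_cancel] at h2
    rw [h2]
    rfl

/-- the canonical generator of the Verma module -/
noncomputable def vV : (C.vermaC μ).M := (1 : ↥C.Um)

lemma vV_ne : C.vV μ ≠ 0 := fun h => C.one_ne (congrArg Subtype.val h)

lemma vV_grV : (C.vV μ) ∈ (C.vermaC μ).grM μ := by
  show ((1 : ↥C.Um) : C.U) ∈ C.grade (μ - μ)
  rw [sub_self]
  exact C.one_mem

lemma vV_hw : IsHWvec (C.vermaC μ) μ (C.vV μ) := by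
  refine ⟨C.vV_grV μ, ?_⟩
  intro ν hν u hu
  show C.PhiV μ (u * ((1 : ↥C.Um) : C.U)) = 0
  rw [show ((1 : ↥C.Um) : C.U) = 1 from rfl, mul_one]
  have hu2 : u = ((1 : ↥C.Um) : C.U) * (((1 : ↥C.U0) : C.U) *
      ((⟨u, hu.1⟩ : ↥C.Up) : C.U)) := by simp
  rw [hu2, C.PhiV_mul]
  have hε : C.epsU ⟨u, hu.1⟩ = 0 :=
    C.epsU_eq_zero (C.prU_of_mem_ne hu.2 (Ne.symm hν))
  rw [hε, mul_zero, zero_smul]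

lemma vermaC_gen (m : ↥C.Um) : (C.vermaC μ).ρ ((m : C.U)) (C.vV μ) = m := by
  show C.PhiV μ ((m : C.U) * ((1 : ↥C.Um) : C.U)) = m
  rw [show ((1 : ↥C.Um) : C.U) = 1 from rfl, mul_one, C.PhiV_Um]

lemma grVμ_span {x : ↥C.Um} (hx : x ∈ (C.vermaC μ).grM μ) : ∃ c : k, x = c • (C.vV μ) := by
  have h1 : (x : C.U) ∈ C.grade 0 := by
    have h0 : (x : C.U) ∈ C.grade (μ - μ) := hx
    rwa [sub_self] at h0
  have h2 : (x : C.U) ∈ Subalgebra.toSubmodule C.Um ⊓ C.grade 0 :=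
    Submodule.mem_inf.2 ⟨x.2, h1⟩
  rw [C.Um_deg0] at h2
  obtain ⟨c, hc⟩ := Submodule.mem_span_singleton.1 h2
  refine ⟨c, Subtype.ext ?_⟩
  change (x : C.U) = c • ((1 : ↥C.Um) : C.U)
  exact hc.symm

end AJSCtx
end DevV2

section DevQ
variable {k : Type} [Field k] {θ : ℕ} {C : AJSCtx k θ}

namespace CMod
variable (A : CMod C) (p : Submodule k A.M)

noncomputable def quotRho (hst : A.stable p) : C.U →ₐ[k] Module.End k (A.M ⧸ p) :=
  AlgHom.ofLinearMap
    { toFun := fun u => Submodule.mapQ p p (A.ρ u) (fun m hm => hst u m hm)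
      map_add' := fun x y => Submodule.linearMap_qext p (LinearMap.ext fun m => by
        simp [Submodule.mapQ_apply, map_add])
      map_smul' := fun c x => Submodule.linearMap_qext p (LinearMap.ext fun m => by
        simp [Submodule.mapQ_apply, map_smul]) }
    (Submodule.linearMap_qext p (LinearMap.ext fun m => by
      simp [Submodule.mapQ_apply]))
    (fun x y => Submodule.linearMap_qext p (LinearMap.ext fun m => by
      simp [Submodule.mapQ_apply, map_mul, Module.End.mul_apply]))

lemma quotRho_mk (hst : A.stable p) (u : C.U) (m : A.M) :
    A.quotRho p hst u (p.mkQ m) = p.mkQ (A.ρ u m) := rfl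

/-- the quotient of an object of `C_k` by a graded stable submodule -/
noncomputable def quotC (hgr : A.gradedSub p) (hst : A.stable p) : CMod C where
  M := A.M ⧸ p
  acg := inferInstance
  modk := inferInstance
  ρ := A.quotRho p hst
  grM := fun ν => Submodule.map p.mkQ (A.grM ν)
  internal := by
    rw [DirectSum.isInternal_submodule_iff_iSupIndep_and_iSup_eq_top]
    constructor
    · intro ν
      rw [disjoint_iff_inf_le]
      rintro x ⟨hx1, hx2⟩
      set prQ : (A.M ⧸ p) →ₗ[k] A.M ⧸ p :=
        Submodule.mapQ p p (A.prM ν) (fun m hm => A.prM_mem_of_graded hgr hm ν) with hprQ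
      have h2 : ∀ y, y ∈ (⨆ j, ⨆ (_ : j ≠ ν), Submodule.map p.mkQ (A.grM j)) →
          prQ y = 0 := by
        intro y hy2
        induction hy2 using Submodule.iSup_induction' with
        | mem τ z hz =>
            by_cases hτ : τ ≠ ν
            · rw [iSup_pos hτ] at hz
              obtain ⟨m, hm, rfl⟩ := hz
              simp only [hprQ, Submodule.mkQ_apply, Submodule.mapQ_apply]
              rw [A.prM_of_mem_ne hm (Ne.symm hτ), Submodule.Quotient.mk_zero]
            · rw [iSup_neg hτ] at hz
              rw [(Submodule.mem_bot k).1 hz, map_zero]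
        | zero => rw [map_zero]
        | add y z _ _ hy hz => rw [map_add, hy, hz, add_zero]
      have h1 : prQ x = x := by
        obtain ⟨m, hm, rfl⟩ := hx1
        simp only [hprQ, Submodule.mkQ_apply, Submodule.mapQ_apply]
        rw [A.prM_of_mem hm]
      rw [← h1, h2 x hx2]
      exact Submodule.zero_mem _
    · have h := congrArg (Submodule.map p.mkQ) A.internal.submodule_iSup_eq_top
      rw [Submodule.map_iSup, Submodule.map_top, Submodule.range_mkQ] at h
      exact h
  fin := inferInstance
  act_graded := by
    intro ν' ν u x hu hx
    obtain ⟨m, hm, rfl⟩ := hx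
    exact ⟨A.ρ u m, A.act_graded ν' ν u m hu hm,
      (A.quotRho_mk p hst u m).symm⟩
  act_U0 := by
    intro s ν x hx
    obtain ⟨m, hm, rfl⟩ := hx
    rw [A.quotRho_mk p hst, A.act_U0 s ν m hm, map_smul]

lemma quotC_prM (hgr : A.gradedSub p) (hst : A.stable p) (ν : Fin θ → ℤ) (x : A.M ⧸ p) :
    (A.quotC p hgr hst).prM ν x =
      Submodule.mapQ p p (A.prM ν) (fun m hm => A.prM_mem_of_graded hgr hm ν) x := by
  have hx : x ∈ ⨆ τ, (A.quotC p hgr hst).grM τ := by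
    rw [(A.quotC p hgr hst).internal.submodule_iSup_eq_top]; trivial
  induction hx using Submodule.iSup_induction' with
  | mem τ y hy =>
      obtain ⟨m, hm, rfl⟩ := hy
      have hmem : p.mkQ m ∈ (A.quotC p hgr hst).grM τ := ⟨m, hm, rfl⟩
      rcases eq_or_ne ν τ with rfl | hne
      · rw [(A.quotC p hgr hst).prM_of_mem hmem]
        simp only [Submodule.mkQ_apply, Submodule.mapQ_apply]
        rw [A.prM_of_mem hm]
      · rw [(A.quotC p hgr hst).prM_of_mem_ne hmem hne]
        simp only [Submodule.mkQ_apply, Submodule.mapQ_apply]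
        rw [A.prM_of_mem_ne hm hne, Submodule.Quotient.mk_zero]
        rfl
  | zero => exact (map_zero ((A.quotC p hgr hst).prM ν)).trans (map_zero (Submodule.mapQ p p (A.prM ν) (fun m hm => A.prM_mem_of_graded hgr hm ν))).symm
  | add y z _ _ hy hz => exact ((map_add ((A.quotC p hgr hst).prM ν) y z).trans (congrArg₂ (· + ·) hy hz)).trans (map_add (Submodule.mapQ p p (A.prM ν) (fun m hm => A.prM_mem_of_graded hgr hm ν)) y z).symm

end CMod
end DevQ

section DevH
variable {k : Type} [Field k] {θ : ℕ} {C : AJSCtx k θ}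

lemma mem_sSup_ind {V : Type} [AddCommGroup V] [Module k V]
    {S : Set (Submodule k V)} {P : V → Prop} (h0 : P 0)
    (hadd : ∀ x y, P x → P y → P (x + y)) (hmem : ∀ q ∈ S, ∀ x ∈ q, P x) :
    ∀ m ∈ sSup S, P m := by
  intro m hm
  rw [sSup_eq_iSup] at hm
  induction hm using Submodule.iSup_induction' with
  | mem q y hy =>
      by_cases hq : q ∈ S
      · rw [iSup_pos hq] at hy
        exact hmem q hq y hy
      · rw [iSup_neg hq] at hy
        rw [(Submodule.mem_bot k).1 hy]
        exact h0
  | zero => exact h0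
  | add x y _ _ hx hy => exact hadd x y hx hy

lemma chom_prM {A B : CMod C} (f : A.M →ₗ[k] B.M) (hc : IsCHom A B f)
    (ν : Fin θ → ℤ) (m : A.M) : f (A.prM ν m) = B.prM ν (f m) := by
  have hm : m ∈ ⨆ τ, A.grM τ := by rw [A.internal.submodule_iSup_eq_top]; trivial
  induction hm using Submodule.iSup_induction' with
  | mem τ x hx =>
      rcases eq_or_ne ν τ with rfl | hne
      · rw [A.prM_of_mem hx, B.prM_of_mem (hc.2 ν x hx)]
      · rw [A.prM_of_mem_ne hx hne, map_zero, B.prM_of_mem_ne (hc.2 τ x hx) hne]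
  | zero => simp
  | add x y _ _ hx hy => simp only [map_add, hx, hy]

lemma ciso_symm {A B : CMod C} (h : CIso A B) : CIso B A := by
  obtain ⟨f, hc, hb⟩ := h
  set e := LinearEquiv.ofBijective f hb with he
  have h1 : ∀ y, f (e.symm y) = y := fun y => e.apply_symm_apply y
  refine ⟨e.symm.toLinearMap, ⟨?_, ?_⟩, e.symm.bijective⟩
  · intro u m'
    apply hb.1
    show f (e.symm (B.ρ u m')) = f (A.ρ u (e.symm m'))
    rw [h1, hc.1 u (e.symm m'), h1]
  · intro ν m' hm'
    show e.symm m' ∈ A.grM ν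
    have h2 : f (A.prM ν (e.symm m')) = B.prM ν m' := by
      rw [chom_prM f hc ν (e.symm m'), h1]
    have h3 : B.prM ν m' = m' := B.prM_of_mem hm'
    have h4 : f (A.prM ν (e.symm m')) = f (e.symm m') := by rw [h2, h3, h1]
    have h5 := hb.1 h4
    rw [← h5]
    exact A.prM_mem ν _

lemma exists_hwsimple (C : AJSCtx k θ) (μ : Fin θ → ℤ) :
    ∃ L : CMod C, IsHWSimple μ L := by
  classical
  set Z := C.vermaC μ with hZdef
  set S : Set (Submodule k Z.M) := {q | Z.gradedSub q ∧ Z.stable q ∧ C.vV μ ∉ q} with hSdef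
  set R : Submodule k Z.M := sSup S with hRdef
  have hRgr : Z.gradedSub R := by
    refine (Z.gradedSub_iff_prM R).2 ?_
    intro m hm ν
    refine mem_sSup_ind (P := fun m => Z.prM ν m ∈ R)
      (by show Z.prM ν 0 ∈ R; rw [map_zero]; exact R.zero_mem)
      (fun x y hx hy => by show Z.prM ν (x + y) ∈ R; rw [map_add]; exact R.add_mem hx hy)
      ?_ m hm
    intro q hq x hx
    exact le_sSup hq (Z.prM_mem_of_graded hq.1 hx ν)
  have hRst : Z.stable R := by
    intro u m hm
    refine mem_sSup_ind (P := fun m => Z.ρ u m ∈ R)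
      (by show Z.ρ u 0 ∈ R; rw [map_zero]; exact R.zero_mem)
      (fun x y hx hy => by show Z.ρ u (x + y) ∈ R; rw [map_add]; exact R.add_mem hx hy)
      ?_ m hm
    intro q hq x hx
    exact le_sSup hq (hq.2.1 u x hx)
  have hprMμ : ∀ m ∈ R, Z.prM μ m = 0 := by
    refine mem_sSup_ind (P := fun m => Z.prM μ m = 0)
      (by show Z.prM μ 0 = 0; rw [map_zero])
      (fun x y hx hy => by show Z.prM μ (x + y) = 0; rw [map_add, hx, hy, add_zero]) ?_
    intro q hq x hx
    have h1 : Z.prM μ x ∈ q := Z.prM_mem_of_graded hq.1 hx μ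
    obtain ⟨c, hc⟩ := C.grVμ_span μ (Z.prM_mem μ x)
    rcases eq_or_ne c 0 with rfl | hcne
    · rw [hc, zero_smul]
    · exfalso
      refine hq.2.2 ?_
      have h2 : C.vV μ = c⁻¹ • Z.prM μ x := by
        rw [hc, smul_smul, inv_mul_cancel₀ hcne, one_smul]
      rw [h2]
      exact q.smul_mem _ h1
  have hvR : C.vV μ ∉ R := by
    intro hmem
    have h1 := hprMμ _ hmem
    rw [Z.prM_of_mem (C.vV_grV μ)] at h1
    exact C.vV_ne μ h1
  set L := Z.quotC R hRgr hRst with hLdef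
  set vb : L.M := R.mkQ (C.vV μ) with hvb
  have hvb0 : vb ≠ 0 := by
    intro h
    rw [hvb, Submodule.mkQ_apply] at h
    exact hvR ((Submodule.Quotient.mk_eq_zero R).1 h)
  have hvbgr : vb ∈ L.grM μ := ⟨C.vV μ, C.vV_grV μ, rfl⟩
  have hvbhw : IsHWvec L μ vb := by
    refine ⟨hvbgr, ?_⟩
    intro ν hν u hu
    show Z.quotRho R hRst u (R.mkQ (C.vV μ)) = 0
    rw [Z.quotRho_mk R hRst, (C.vV_hw μ).2 ν hν u hu, map_zero]
  refine ⟨L, ⟨⟨vb, hvb0⟩, ?_⟩, vb, hvb0, hvbhw⟩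
  intro q hqgr hqst
  set q' : Submodule k Z.M := Submodule.comap R.mkQ q with hq'def
  have hq'st : Z.stable q' := by
    intro u m hm
    show R.mkQ (Z.ρ u m) ∈ q
    rw [← Z.quotRho_mk R hRst]
    exact hqst u (R.mkQ m) hm
  have hq'gr : Z.gradedSub q' := by
    refine (Z.gradedSub_iff_prM q').2 ?_
    intro m hm ν
    show R.mkQ (Z.prM ν m) ∈ q
    have h1 : R.mkQ (Z.prM ν m) = L.prM ν (R.mkQ m) := by
      rw [Z.quotC_prM R hRgr hRst ν (R.mkQ m)]
      simp only [Submodule.mkQ_apply, Submodule.mapQ_apply]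
    rw [h1]
    exact (L.gradedSub_iff_prM q).1 hqgr (R.mkQ m) hm ν
  by_cases hvq : C.vV μ ∈ q'
  · right
    rw [Submodule.eq_top_iff']
    intro x
    obtain ⟨m, rfl⟩ := R.mkQ_surjective x
    have h1 : R.mkQ m = L.ρ (((show ↥C.Um from m) : C.U)) (R.mkQ (C.vV μ)) := by
      rw [show L.ρ (((show ↥C.Um from m) : C.U)) (R.mkQ (C.vV μ)) =
        R.mkQ (Z.ρ (((show ↥C.Um from m) : C.U)) (C.vV μ)) from Z.quotRho_mk R hRst _ _,
        C.vermaC_gen μ (show ↥C.Um from m)]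
    rw [h1]
    exact hqst _ _ hvq
  · left
    have hq'S : q' ∈ S := ⟨hq'gr, hq'st, hvq⟩
    have hq'R : q' ≤ R := le_sSup hq'S
    rw [eq_bot_iff]
    intro x hx
    obtain ⟨m, rfl⟩ := R.mkQ_surjective x
    have hm : m ∈ q' := hx
    have hmR : m ∈ R := hq'R hm
    change R.mkQ m ∈ (⊥ : Submodule k (Z.M ⧸ R))
    rw [Submodule.mem_bot, Submodule.mkQ_apply, Submodule.Quotient.mk_eq_zero]
    exact hmR

end DevH

/-- **Classification of simple objects of `C_k`.** Every simple object contains a nonzero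
highest-weight vector of some weight `μ` (and is then isomorphic to `L(μ)`, i.e. to any
simple highest-weight module of weight `μ`); two simple highest-weight modules of weights
`μ, λ` are isomorphic iff `μ = λ`; and every weight occurs. Thus `μ ↦ L(μ)` is a
bijection between `ℤ^θ` and the isomorphism classes of simple objects of `C_k`. -/
theorem classification_of_simples {k : Type} [Field k] [IsAlgClosed k] [CharZero k]
    {θ : ℕ} (hθ : 1 ≤ θ) (C : AJSCtx k θ) :
    (∀ L : CMod C, L.IsSimpleObj → ∃ (μ : Fin θ → ℤ) (v : L.M), v ≠ 0 ∧ IsHWvec L μ v ∧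
      ∀ L' : CMod C, IsHWSimple μ L' → CIso L L') ∧
    (∀ (μ lam : Fin θ → ℤ) (L L' : CMod C), IsHWSimple μ L → IsHWSimple lam L' →
      (CIso L L' ↔ μ = lam)) ∧
    (∀ μ : Fin θ → ℤ, ∃ L : CMod C, IsHWSimple μ L) := by
  refine ⟨?_, ?_, ?_⟩
  · intro L hL
    obtain ⟨μ, v, hv0, hw⟩ := L.exists_hw hL.1
    refine ⟨μ, v, hv0, hw, ?_⟩
    rintro L' ⟨hL', v', hv'0, hw'⟩
    exact ciso_of_hw hL hL' hv0 hv'0 hw hw'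
  · rintro μ lam L L' ⟨hL, v, hv0, hw⟩ ⟨hL', v', hv'0, hw'⟩
    constructor
    · rintro hiso
      obtain ⟨f, hc, hb⟩ := hiso
      have h1 := ciso_weight f hc hb hw.1 hv0
      have hle1 : μ ≤ lam := weight_le hL' hv'0 hw' h1.1 h1.2
      obtain ⟨g, hcg, hbg⟩ := ciso_symm ⟨f, hc, hb⟩
      have h2 := ciso_weight g hcg hbg hw'.1 hv'0
      have hle2 : lam ≤ μ := weight_le hL hv0 hw h2.1 h2.2
      exact le_antisymm hle1 hle2
    · rintro rfl
      exact ciso_of_hw hL hL' hv0 hv'0 hw hw'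
  · intro μ
    exact exists_hwsimple C μ
end

section
/- The category C_k has enough projectives: every object of C_k is a quotient (homomorphic image) of a projective object of C_k. -/
open scoped TensorProduct

variable {k : Type} [Field k] {θ : ℕ}

variable {C : AJSCtx k θ}

/-! ### Auxiliary: projections of an internal direct sum decomposition -/

section proj
open scoped DirectSum
variable {R V ι : Type*} [CommRing R] [AddCommGroup V] [Module R V] [DecidableEq ι]
variable (p : ι → Submodule R V)

noncomputable def decompE (hp : DirectSum.IsInternal p) : V ≃ₗ[R] ⨁ i, p i :=
  (LinearEquiv.ofBijective (DirectSum.coeLinearMap p) hp).symm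

noncomputable def projL (hp : DirectSum.IsInternal p) (i : ι) : V →ₗ[R] V :=
  (p i).subtype ∘ₗ (DirectSum.component R ι (fun j => ↥(p j)) i) ∘ₗ (decompE p hp).toLinearMap

theorem projL_mem (hp : DirectSum.IsInternal p) (i : ι) (x : V) : projL p hp i x ∈ p i :=
  Submodule.coe_mem _

theorem decompE_of_mem (hp : DirectSum.IsInternal p) {i : ι} {x : V} (hx : x ∈ p i) :
    decompE p hp x = DirectSum.lof R ι (fun j => ↥(p j)) i ⟨x, hx⟩ := by
  apply (LinearEquiv.ofBijective (DirectSum.coeLinearMap p) hp).injective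
  simp [decompE]
  erw [DirectSum.coeLinearMap_of]

theorem projL_of_mem (hp : DirectSum.IsInternal p) {i : ι} {x : V} (hx : x ∈ p i) :
    projL p hp i x = x := by
  simp [projL, decompE_of_mem p hp hx]

theorem projL_of_mem_ne (hp : DirectSum.IsInternal p) {i j : ι} (h : j ≠ i) {x : V} (hx : x ∈ p j) :
    projL p hp i x = 0 := by
  simp only [projL, LinearMap.coe_comp, Function.comp_apply, LinearEquiv.coe_coe,
    decompE_of_mem p hp hx, DirectSum.component, DFinsupp.lapply]
  show (p i).subtype ((DirectSum.lof R ι (fun j => ↥(p j)) j ⟨x, hx⟩) i) = 0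
  rw [DirectSum.lof_eq_of, DirectSum.of_eq_of_ne _ _ _ h.symm]
  exact map_zero _

open scoped Classical in
noncomputable def suppD (hp : DirectSum.IsInternal p) (x : V) : Finset ι :=
  (decompE p hp x).support

open scoped Classical in
theorem projL_eq_zero_of_not_mem_suppD (hp : DirectSum.IsInternal p) (x : V) {i : ι}
    (hi : i ∉ suppD p hp x) : projL p hp i x = 0 := by
  have : decompE p hp x i = 0 := DFinsupp.notMem_support_iff.mp hi
  simp [projL, DirectSum.component, DFinsupp.lapply]
  erw [this]

open scoped Classical in
theorem sum_projL (hp : DirectSum.IsInternal p) (x : V) (S : Finset ι)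
    (hS : suppD p hp x ⊆ S) : ∑ i ∈ S, projL p hp i x = x := by
  classical
  rw [← Finset.sum_subset hS (fun i _ hi => projL_eq_zero_of_not_mem_suppD p hp x hi)]
  conv_rhs => rw [show x = DirectSum.coeLinearMap p (decompE p hp x) from
    ((LinearEquiv.ofBijective (DirectSum.coeLinearMap p) hp).apply_symm_apply x).symm]
  rw [← DirectSum.sum_support_of (decompE p hp x)]
  rw [map_sum]
  apply Finset.sum_congr rfl
  intro i _
  erw [DirectSum.coeLinearMap_of]
  rfl

theorem isInternal_comp_equiv (hp : DirectSum.IsInternal p) (e : ι ≃ ι) :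
    DirectSum.IsInternal (fun i => p (e i)) := by
  rw [DirectSum.isInternal_submodule_iff_iSupIndep_and_iSup_eq_top] at hp ⊢
  exact ⟨hp.1.comp e.injective, by rw [e.iSup_comp]; exact hp.2⟩

theorem isInternal_quotient (hp : DirectSum.IsInternal p) (q : Submodule R V)
    (hq : q ≤ ⨆ i, q ⊓ p i) :
    DirectSum.IsInternal (fun i => (p i).map q.mkQ) := by
  obtain ⟨hind, htop⟩ := (DirectSum.isInternal_submodule_iff_iSupIndep_and_iSup_eq_top p).mp hp
  rw [DirectSum.isInternal_submodule_iff_iSupIndep_and_iSup_eq_top]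
  constructor
  · rw [iSupIndep_def]
    intro i
    rw [disjoint_iff_inf_le]
    rintro z ⟨⟨a, ha, rfl⟩, hz2⟩
    have : (⨆ j, ⨆ (_ : j ≠ i), (p j).map q.mkQ) = ((⨆ j, ⨆ (_ : j ≠ i), p j).map q.mkQ) := by
      rw [Submodule.map_iSup]
      exact iSup_congr fun j => by rw [Submodule.map_iSup]
    rw [this] at hz2
    obtain ⟨b, hb, hab⟩ := hz2
    have hker : a - b ∈ q := by
      rw [← Submodule.ker_mkQ q, LinearMap.mem_ker, map_sub, hab, sub_self]
    have hproj : projL p hp i (a - b) ∈ q := by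
      have hle : (⨆ j, q ⊓ p j) ≤ q.comap (projL p hp i) := by
        apply iSup_le
        intro j x hx
        rcases eq_or_ne j i with rfl | hji
        · simpa [Submodule.mem_comap, projL_of_mem p hp hx.2] using hx.1
        · simp [Submodule.mem_comap, projL_of_mem_ne p hp hji hx.2]
      exact hle (hq hker)
    have hb0 : projL p hp i b = 0 := by
      have hle : (⨆ j, ⨆ (_ : j ≠ i), p j) ≤ LinearMap.ker (projL p hp i) := by
        apply iSup_le; intro j; apply iSup_le; intro hji
        intro x hx
        simp [LinearMap.mem_ker, projL_of_mem_ne p hp hji hx]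
      exact hle hb
    have ha' : a ∈ q := by
      have heq : a = projL p hp i (a - b) := by
        rw [map_sub, hb0, sub_zero, projL_of_mem p hp ha]
      rw [heq]; exact hproj
    simp only [Submodule.mem_bot]
    rw [← Submodule.ker_mkQ q, LinearMap.mem_ker] at ha'
    exact ha'
  · rw [← Submodule.map_iSup, htop, Submodule.map_top, Submodule.range_mkQ]

end proj

/-! ### Auxiliary: the projective objects `P(λ) = U ⊗_{U⁰} k_{π∘λ̃}` realized as `U/J(λ)` -/

section Pconstr
variable {k : Type} [Field k] {θ : ℕ} (C : AJSCtx k θ)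

/-- The character `π ∘ tilde λ`. -/
noncomputable def cc (lam : Fin θ → ℤ) (s : C.U0) : k := C.π (C.tilde lam s)

/-- The left ideal `J(λ)` spanned by `u·(s - π(λ̃ s))`. -/
noncomputable def Jmod (lam : Fin θ → ℤ) : Submodule k C.U :=
  Submodule.span k {x : C.U | ∃ (u : C.U) (s : C.U0), x = u * ((s : C.U) - cc C lam s • 1)}

theorem gen_mem_J (lam : Fin θ → ℤ) (u : C.U) (s : C.U0) :
    u * ((s : C.U) - cc C lam s • 1) ∈ Jmod C lam :=
  Submodule.subset_span ⟨u, s, rfl⟩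

theorem J_mul_left (lam : Fin θ → ℤ) (v : C.U) {x : C.U} (hx : x ∈ Jmod C lam) :
    v * x ∈ Jmod C lam := by
  induction hx using Submodule.span_induction with
  | mem x hx => obtain ⟨u, s, rfl⟩ := hx; rw [← mul_assoc]; exact gen_mem_J C lam _ s
  | zero => simpa using Submodule.zero_mem _
  | add a b _ _ ha hb => rw [mul_add]; exact Submodule.add_mem _ ha hb
  | smul c a _ ha => rw [mul_smul_comm]; exact Submodule.smul_mem _ _ ha

theorem mkQ_mul_U0 (lam : Fin θ → ℤ) (u : C.U) (s : C.U0) :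
    (Jmod C lam).mkQ (u * (s : C.U)) = cc C lam s • (Jmod C lam).mkQ u := by
  have h : u * (s : C.U) - cc C lam s • u = u * ((s : C.U) - cc C lam s • 1) := by
    rw [mul_sub, mul_smul_comm, mul_one]
  have h2 : (Jmod C lam).mkQ (u * (s : C.U) - cc C lam s • u) = 0 := by
    rw [h, ← LinearMap.mem_ker, Submodule.ker_mkQ]; exact gen_mem_J C lam u s
  rw [map_sub, map_smul, sub_eq_zero] at h2
  exact h2

theorem J_graded (lam : Fin θ → ℤ) :
    Jmod C lam ≤ ⨆ ν : Fin θ → ℤ, Jmod C lam ⊓ C.grade ν := by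
  classical
  apply Submodule.span_le.mpr
  rintro x ⟨u, s, rfl⟩
  have hu := sum_projL C.grade C.internal u (suppD C.grade C.internal u) (subset_refl _)
  rw [show u * ((s : C.U) - cc C lam s • 1)
      = ∑ ν ∈ suppD C.grade C.internal u,
          projL C.grade C.internal ν u * ((s : C.U) - cc C lam s • 1) by
    rw [← Finset.sum_mul, hu]]
  apply Submodule.sum_mem
  intro ν _
  apply Submodule.mem_iSup_of_mem ν
  refine Submodule.mem_inf.mpr ⟨gen_mem_J C lam _ s, ?_⟩
  have h1 : ((s : C.U) - cc C lam s • 1) ∈ C.grade 0 :=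
    Submodule.sub_mem _ (C.U0_deg0 s.2) (Submodule.smul_mem _ _ C.one_mem)
  simpa using C.mul_mem (projL_mem C.grade C.internal ν u) h1

theorem J_le_comap (lam : Fin θ → ℤ) (v : C.U) :
    Jmod C lam ≤ (Jmod C lam).comap (LinearMap.mulLeft k v) :=
  fun _ hx => J_mul_left C lam v hx

/-- The `U`-action on `U/J(λ)` by left multiplication. -/
noncomputable def Pρ (lam : Fin θ → ℤ) : C.U →ₐ[k] Module.End k (C.U ⧸ Jmod C lam) where
  toFun v := (Jmod C lam).mapQ (Jmod C lam) (LinearMap.mulLeft k v) (J_le_comap C lam v)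
  map_one' := by
    apply Submodule.linearMap_qext; ext x
    simp [Submodule.mapQ_apply]
  map_mul' a b := by
    apply Submodule.linearMap_qext; ext x
    simp [Submodule.mapQ_apply, mul_assoc]
  map_zero' := by
    apply Submodule.linearMap_qext; ext x
    simp [Submodule.mapQ_apply]
  map_add' a b := by
    apply Submodule.linearMap_qext; ext x
    simp [Submodule.mapQ_apply, add_mul]
  commutes' c := by
    apply Submodule.linearMap_qext; ext x
    simp [Submodule.mapQ_apply, Algebra.smul_def, Module.algebraMap_end_apply]
    rw [← Algebra.smul_def]
    exact Submodule.Quotient.mk_smul _ c x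

theorem Pρ_mk (lam : Fin θ → ℤ) (u x : C.U) :
    Pρ C lam u ((Jmod C lam).mkQ x) = (Jmod C lam).mkQ (u * x) := by
  simp [Pρ, Submodule.mapQ_apply]

end Pconstr

section Pmoddef
variable {k : Type} [Field k] {θ : ℕ} (C : AJSCtx k θ)

/-- The multiplication map `U⁻ ⊗ U⁺ → U/J(λ)`. -/
noncomputable def Tmap (lam : Fin θ → ℤ) : (↥C.Um ⊗[k] ↥C.Up) →ₗ[k] (C.U ⧸ Jmod C lam) :=
  (Jmod C lam).mkQ ∘ₗ TensorProduct.lift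
    ((LinearMap.mul k C.U).compl₁₂ C.Um.val.toLinearMap C.Up.val.toLinearMap)

theorem Tmap_tmul (lam : Fin θ → ℤ) (a : ↥C.Um) (b : ↥C.Up) :
    Tmap C lam (a ⊗ₜ b) = (Jmod C lam).mkQ ((a : C.U) * (b : C.U)) := by
  simp [Tmap]

theorem core_mem (lam : Fin θ → ℤ) (a : ↥C.Um) (s : ↥C.U0) {b : C.U} (hb : b ∈ C.Up) :
    (Jmod C lam).mkQ ((a : C.U) * ((s : C.U) * b)) ∈ LinearMap.range (Tmap C lam) := by
  classical
  have hb' : b ∈ (⨆ ν, Subalgebra.toSubmodule C.Up ⊓ C.grade ν) := by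
    rw [← C.Up_graded]; exact hb
  refine Submodule.iSup_induction'
    (motive := fun x _ => (Jmod C lam).mkQ ((a : C.U) * ((s : C.U) * x)) ∈ LinearMap.range (Tmap C lam))
    _ ?_ ?_ ?_ hb'
  · intro ν x hx
    have h1 : (s : C.U) * x = x * ((C.tilde ν s : C.U0) : C.U) := by
      have := C.tilde_comm ν x hx.2 s
      exact this
    rw [h1, ← mul_assoc, mul_assoc ((a : C.U)) x, ← mul_assoc]
    rw [mkQ_mul_U0 C lam ((a : C.U) * x) (C.tilde ν s)]
    apply Submodule.smul_mem
    exact ⟨a ⊗ₜ (⟨x, hx.1⟩ : ↥C.Up), Tmap_tmul C lam a _⟩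
  · simp
  · intro x y _ _ hx hy
    rw [mul_add, mul_add, map_add]
    exact Submodule.add_mem _ hx hy

theorem Pfin (lam : Fin θ → ℤ) : Module.Finite k (C.U ⧸ Jmod C lam) := by
  classical
  haveI := C.finUm; haveI := C.finUp
  apply Module.Finite.of_surjective (Tmap C lam)
  rw [← LinearMap.range_eq_top]
  rw [eq_top_iff]
  intro y _
  obtain ⟨u, rfl⟩ := (Jmod C lam).mkQ_surjective y
  obtain ⟨t, rfl⟩ := C.triangular.surjective u
  induction t using TensorProduct.induction_on with
  | zero => rw [LinearMap.map_zero, LinearMap.map_zero]; exact Submodule.zero_mem _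
  | add t1 t2 h1 h2 =>
    rw [LinearMap.map_add, LinearMap.map_add]
    exact Submodule.add_mem _ (h1 trivial) (h2 trivial)
  | tmul a w =>
    induction w using TensorProduct.induction_on with
    | zero =>
      rw [TensorProduct.tmul_zero, LinearMap.map_zero, LinearMap.map_zero]; exact Submodule.zero_mem _
    | add w1 w2 h1 h2 =>
      rw [TensorProduct.tmul_add, LinearMap.map_add, LinearMap.map_add]
      exact Submodule.add_mem _ (h1 trivial) (h2 trivial)
    | tmul s b =>
      have : (TensorProduct.lift
          ((LinearMap.mul k C.U).compl₁₂ C.Um.val.toLinearMap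
            (TensorProduct.lift
              ((LinearMap.mul k C.U).compl₁₂ C.U0.val.toLinearMap C.Up.val.toLinearMap))))
          (a ⊗ₜ (s ⊗ₜ b)) = (a : C.U) * ((s : C.U) * (b : C.U)) := by
        simp
      rw [this]
      exact core_mem C lam a s b.2

/-- The object `P(λ)` of `C_k`. -/
noncomputable def Pmod (lam : Fin θ → ℤ) : CMod C where
  M := C.U ⧸ Jmod C lam
  ρ := Pρ C lam
  grM ν := (C.grade (ν - lam)).map (Jmod C lam).mkQ
  internal := by
    classical
    have h1 : DirectSum.IsInternal (fun ν : Fin θ → ℤ => C.grade (ν - lam)) :=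
      isInternal_comp_equiv C.grade C.internal (Equiv.subRight lam)
    apply isInternal_quotient _ h1
    refine le_trans (J_graded C lam) (le_of_eq ?_)
    exact ((Equiv.subRight lam).iSup_comp
      (g := fun ν => Jmod C lam ⊓ C.grade ν)).symm
  fin := Pfin C lam
  act_graded := by
    rintro ν μ u m hu ⟨x, hx, rfl⟩
    refine ⟨u * x, ?_, (Pρ_mk C lam u x).symm⟩
    have := C.mul_mem hu hx
    have h2 : ν + (μ - lam) = ν + μ - lam := by abel
    rwa [h2] at this
  act_U0 := by
    rintro s μ m ⟨x, hx, rfl⟩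
    rw [Pρ_mk C lam _ x, C.tilde_comm (μ - lam) x hx s, mkQ_mul_U0]
    show (C.π ((C.tilde lam) (C.tilde (μ - lam) s))) • _ = (C.π (C.tilde μ s)) • _
    have h2 : μ - lam + lam = μ := by abel
    conv_rhs => rw [← h2, C.tilde_add (μ - lam) lam]
    rfl

end Pmoddef

section Puniv
variable {k : Type} [Field k] {θ : ℕ} (C : AJSCtx k θ)

theorem actVec_J_le_ker (lam : Fin θ → ℤ) (A : CMod C) (m : A.M) (hm : m ∈ A.grM lam) :
    Jmod C lam ≤ LinearMap.ker (actVec A m) := by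
  rw [Jmod, Submodule.span_le]
  rintro x ⟨u, s, rfl⟩
  simp only [SetLike.mem_coe, LinearMap.mem_ker]
  show A.ρ (u * ((s : C.U) - cc C lam s • 1)) m = 0
  have h0 : A.ρ ((s : C.U) - cc C lam s • 1) m = 0 := by
    rw [map_sub, map_smul, map_one, LinearMap.sub_apply, LinearMap.smul_apply,
      Module.End.one_apply, A.act_U0 s lam m hm]
    simp [cc]
  rw [map_mul, Module.End.mul_apply, h0, map_zero]

/-- The morphism `P(λ) → A` determined by `m ∈ A_λ`. -/
noncomputable def univφ (lam : Fin θ → ℤ) (A : CMod C) (m : A.M) (hm : m ∈ A.grM lam) :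
    (C.U ⧸ Jmod C lam) →ₗ[k] A.M :=
  (Jmod C lam).liftQ (actVec A m) (actVec_J_le_ker C lam A m hm)

theorem univφ_mk (lam : Fin θ → ℤ) (A : CMod C) (m : A.M) (hm : m ∈ A.grM lam) (u : C.U) :
    univφ C lam A m hm ((Jmod C lam).mkQ u) = A.ρ u m := by
  simp only [univφ, Submodule.mkQ_apply, Submodule.liftQ_apply]
  rfl

theorem univφ_CHom (lam : Fin θ → ℤ) (A : CMod C) (m : A.M) (hm : m ∈ A.grM lam) :
    IsCHom (Pmod C lam) A (univφ C lam A m hm) := by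
  constructor
  · intro u x
    obtain ⟨v, rfl⟩ := (Jmod C lam).mkQ_surjective x
    show univφ C lam A m hm (Pρ C lam u ((Jmod C lam).mkQ v))
        = A.ρ u (univφ C lam A m hm ((Jmod C lam).mkQ v))
    rw [Pρ_mk, univφ_mk, univφ_mk, map_mul, Module.End.mul_apply]
  · rintro ν x hx
    obtain ⟨y, hy, rfl⟩ := hx
    show univφ C lam A m hm ((Jmod C lam).mkQ y) ∈ A.grM ν
    rw [univφ_mk]
    have := A.act_graded (ν - lam) lam y m hy hm
    have h2 : ν - lam + lam = ν := by abel
    rwa [h2] at this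

theorem hom_ext_fromP (lam : Fin θ → ℤ) (B : CMod C)
    (f g : (C.U ⧸ Jmod C lam) →ₗ[k] B.M)
    (hf : ∀ (u : C.U) (x : C.U ⧸ Jmod C lam), f (Pρ C lam u x) = B.ρ u (f x))
    (hg : ∀ (u : C.U) (x : C.U ⧸ Jmod C lam), g (Pρ C lam u x) = B.ρ u (g x))
    (h1 : f ((Jmod C lam).mkQ 1) = g ((Jmod C lam).mkQ 1)) : f = g := by
  apply Submodule.linearMap_qext
  ext u
  show f ((Jmod C lam).mkQ u) = g ((Jmod C lam).mkQ u)
  have hu : (Jmod C lam).mkQ u = Pρ C lam u ((Jmod C lam).mkQ 1) := by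
    rw [Pρ_mk, mul_one]
  rw [hu, hf, hg, h1]

/-- degree-preserving equivariant maps commute with the grading projections -/
theorem projL_comm (A B : CMod C) (g : A.M →ₗ[k] B.M) (hg : IsCHom A B g)
    (lam : Fin θ → ℤ) (x : A.M) :
    g (projL A.grM A.internal lam x) = projL B.grM B.internal lam (g x) := by
  classical
  have hx : x ∈ (⨆ ν, A.grM ν) := by
    rw [(DirectSum.isInternal_submodule_iff_iSupIndep_and_iSup_eq_top A.grM).mp A.internal |>.2]
    trivial
  refine Submodule.iSup_induction'
    (motive := fun y _ => g (projL A.grM A.internal lam y) = projL B.grM B.internal lam (g y))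
    _ ?_ ?_ ?_ hx
  · intro μ y hy
    rcases eq_or_ne μ lam with rfl | hne
    · rw [projL_of_mem A.grM A.internal hy, projL_of_mem B.grM B.internal (hg.2 μ y hy)]
    · rw [projL_of_mem_ne A.grM A.internal hne hy, map_zero,
        projL_of_mem_ne B.grM B.internal hne (hg.2 μ y hy)]
  · show g (projL A.grM A.internal lam 0) = projL B.grM B.internal lam (g 0)
    rw [map_zero, map_zero, map_zero]
  · intro y z _ _ hy hz
    show g (projL A.grM A.internal lam (y + z)) = projL B.grM B.internal lam (g (y + z))
    simp only [map_add, hy, hz]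

theorem Pmod_projective (lam : Fin θ → ℤ) : CProjective (Pmod C lam) := by
  classical
  intro A B g hg hsur f hf
  have honedeg : (Jmod C lam).mkQ 1 ∈ (Pmod C lam).grM lam :=
    ⟨1, by simpa using C.one_mem, rfl⟩
  have hfB : f ((Jmod C lam).mkQ 1) ∈ B.grM lam := hf.2 lam _ honedeg
  obtain ⟨a, ha⟩ := hsur (f ((Jmod C lam).mkQ 1))
  set mA := projL A.grM A.internal lam a with hmAdef
  have hmA : mA ∈ A.grM lam := projL_mem _ _ _ _
  have hg_mA : g mA = f ((Jmod C lam).mkQ 1) := by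
    rw [hmAdef, projL_comm C A B g hg lam a, ha, projL_of_mem B.grM B.internal hfB]
  refine ⟨univφ C lam A mA hmA, univφ_CHom C lam A mA hmA, ?_⟩
  apply hom_ext_fromP C lam B
  · intro u x
    have h2 : univφ C lam A mA hmA (Pρ C lam u x)
        = A.ρ u (univφ C lam A mA hmA x) := (univφ_CHom C lam A mA hmA).1 u x
    show g (univφ C lam A mA hmA (Pρ C lam u x)) = B.ρ u (g (univφ C lam A mA hmA x))
    rw [h2]
    exact hg.1 u _
  · exact fun u x => hf.1 u x
  · show g (univφ C lam A mA hmA ((Jmod C lam).mkQ 1)) = _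
    rw [univφ_mk, map_one]
    show g mA = f ((Jmod C lam).mkQ 1)
    rw [hg_mA]

end Puniv

section PiCMod
variable {k : Type} [Field k] {θ : ℕ} {C : AJSCtx k θ}
variable {ι : Type} [Fintype ι] [DecidableEq ι] (A : ι → CMod C)

/-- The action on a finite product of objects of `C_k`. -/
noncomputable def piρ : C.U →ₐ[k] Module.End k (∀ i, (A i).M) where
  toFun u := LinearMap.pi (fun i => ((A i).ρ u) ∘ₗ LinearMap.proj i)
  map_one' := by
    apply LinearMap.ext; intro x
    funext i
    simp [LinearMap.pi_apply]
  map_mul' a b := by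
    apply LinearMap.ext; intro x
    funext i
    simp [LinearMap.pi_apply, Module.End.mul_apply, map_mul]
  map_zero' := by
    apply LinearMap.ext; intro x
    funext i
    simp [LinearMap.pi_apply]
  map_add' a b := by
    apply LinearMap.ext; intro x
    funext i
    simp [LinearMap.pi_apply, LinearMap.add_apply, map_add]
  commutes' c := by
    apply LinearMap.ext; intro x
    funext i
    simp [LinearMap.pi_apply, Module.algebraMap_end_apply]

theorem piρ_apply (u : C.U) (x : ∀ i, (A i).M) (i : ι) :
    piρ A u x i = (A i).ρ u (x i) := rfl

/-- A finite product of objects of `C_k`. -/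
noncomputable def piCMod : CMod C where
  M := ∀ i, (A i).M
  ρ := piρ A
  grM ν := Submodule.pi Set.univ (fun i => (A i).grM ν)
  internal := by
    classical
    rw [DirectSum.isInternal_submodule_iff_iSupIndep_and_iSup_eq_top]
    constructor
    · rw [iSupIndep_def]
      intro ν
      rw [disjoint_iff_inf_le]
      rintro x ⟨hx1, hx2⟩
      have h2 : x ∈ Submodule.pi Set.univ (fun i => ⨆ μ, ⨆ (_ : μ ≠ ν), (A i).grM μ) := by
        have hle : (⨆ μ, ⨆ (_ : μ ≠ ν), Submodule.pi Set.univ (fun i => (A i).grM μ))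
            ≤ Submodule.pi Set.univ (fun i => ⨆ μ, ⨆ (_ : μ ≠ ν), (A i).grM μ) := by
          apply iSup_le; intro μ; apply iSup_le; intro hμν
          intro y hy i hi
          exact Submodule.mem_iSup_of_mem μ (Submodule.mem_iSup_of_mem hμν (hy i hi))
        exact hle hx2
      rw [Submodule.mem_bot]
      funext i
      have hind := ((DirectSum.isInternal_submodule_iff_iSupIndep_and_iSup_eq_top
        (A i).grM).mp (A i).internal).1
      have hd := iSupIndep_def.mp hind ν
      have : x i ∈ (⊥ : Submodule k (A i).M) :=
        hd.le_bot (Submodule.mem_inf.mpr ⟨hx1 i trivial, h2 i trivial⟩)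
      simpa using this
    · rw [eq_top_iff]
      intro x _
      have hx : x = ∑ ν ∈ Finset.univ.biUnion
          (fun i => suppD (A i).grM (A i).internal (x i)),
          (fun i => projL (A i).grM (A i).internal ν (x i)) := by
        funext i
        rw [Finset.sum_apply]
        exact (sum_projL (A i).grM (A i).internal (x i) _
          (fun ν hν => Finset.mem_biUnion.mpr ⟨i, Finset.mem_univ i, hν⟩)).symm
      rw [hx]
      apply Submodule.sum_mem
      intro ν _
      exact Submodule.mem_iSup_of_mem ν (fun i _ => projL_mem (A i).grM (A i).internal ν (x i))
  fin := by infer_instance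
  act_graded := by
    intro ν μ u m hu hm
    intro i _
    exact (A i).act_graded ν μ u (m i) hu (hm i trivial)
  act_U0 := by
    intro s μ m hm
    funext i
    show (A i).ρ (s : C.U) (m i) = (C.π (C.tilde μ s) • m) i
    rw [(A i).act_U0 s μ (m i) (hm i trivial)]
    rfl

theorem single_CHom (B : CMod C) (f : (∀ i, (A i).M) →ₗ[k] B.M)
    (hf : IsCHom (piCMod A) B f) (i : ι) :
    IsCHom (A i) B (f ∘ₗ LinearMap.single k (fun j => (A j).M) i) := by
  constructor
  · intro u m
    have hs : (LinearMap.single k (fun j => (A j).M) i) ((A i).ρ u m)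
        = piρ A u ((LinearMap.single k (fun j => (A j).M) i) m) := by
      funext j
      rcases eq_or_ne j i with rfl | hne
      · simp [LinearMap.single_apply, piρ_apply]
      · simp [LinearMap.single_apply, piρ_apply, Pi.single_eq_of_ne hne]
    show f ((LinearMap.single k (fun j => (A j).M) i) ((A i).ρ u m)) = _
    rw [hs]
    exact hf.1 u _
  · intro ν m hm
    apply hf.2 ν
    intro j _
    rcases eq_or_ne j i with rfl | hne
    · simpa [LinearMap.single_apply] using hm
    · simp [LinearMap.single_apply, Pi.single_eq_of_ne hne]

theorem piCMod_projective (hA : ∀ i, CProjective (A i)) : CProjective (piCMod A) := by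
  classical
  intro X B g hg hsur f hf
  choose h hh1 hh2 using fun i => hA i X B g hg hsur
    (f ∘ₗ LinearMap.single k (fun j => (A j).M) i) (single_CHom A B f hf i)
  refine ⟨∑ i, (h i) ∘ₗ LinearMap.proj i, ?_, ?_⟩
  · have : (∑ i, (h i) ∘ₗ LinearMap.proj i) ∈ homC (piCMod A) X := by
      apply Submodule.sum_mem
      intro i _
      constructor
      · intro u x
        show h i ((piρ A u x) i) = X.ρ u (h i (x i))
        show h i ((A i).ρ u (x i)) = X.ρ u (h i (x i))
        exact (hh1 i).1 u (x i)
      · intro ν x hx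
        exact (hh1 i).2 ν (x i) (hx i trivial)
    exact this
  · apply LinearMap.ext
    intro x
    show g ((∑ i, (h i) ∘ₗ LinearMap.proj i) x) = f x
    rw [show ((∑ i, (h i) ∘ₗ LinearMap.proj i) x) = ∑ i, h i (x i) from
      LinearMap.sum_apply _ _ _, map_sum]
    have hx : ∀ i : ι, g (h i (x i))
        = f (LinearMap.single k (fun j => (A j).M) i (x i)) := by
      intro i
      exact congrArg (fun φ : (A i).M →ₗ[k] B.M => φ (x i)) (hh2 i)
    have key : (∑ i, g (h i (x i))) = f x := by
      rw [show (∑ i, g (h i (x i)))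
            = ∑ i, f (LinearMap.single k (fun j => (A j).M) i (x i)) from
          Finset.sum_congr rfl fun i _ => hx i,
        show (∑ i, f (LinearMap.single k (fun j => (A j).M) i (x i)))
            = f (∑ i, LinearMap.single k (fun j => (A j).M) i (x i)) from (map_sum f _ _).symm]
      congr 1
      funext j
      erw [Finset.sum_apply]
      simp [LinearMap.single_apply]
      exact (Finset.sum_eq_single j (fun c _ hc => Pi.single_eq_of_ne' (M := fun i => (A i).M) hc (x c))
        (fun h => absurd (Finset.mem_univ j) h)).trans (Pi.single_eq_same (M := fun i => (A i).M) j (x j))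
    exact key

end PiCMod

/-- **`C_k` has enough projectives**: every object of `C_k` is a homomorphic image of a
projective object of `C_k`. -/
theorem enough_projectives {k : Type} [Field k] [IsAlgClosed k] [CharZero k]
    {θ : ℕ} (hθ : 1 ≤ θ) (C : AJSCtx k θ) (M : CMod C) :
    ∃ (P : CMod C) (f : P.M →ₗ[k] M.M),
      CProjective P ∧ IsCHom P M f ∧ Function.Surjective f := by
  classical
  let b := Module.finBasis k M.M
  set n := Module.finrank k M.M with hn
  let D : Finset (Fin θ → ℤ) :=
    Finset.univ.biUnion (fun j : Fin n => suppD M.grM M.internal (b j))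
  let ι := {ν // ν ∈ D} × Fin n
  let A : ι → CMod C := fun i => Pmod C (i.1 : Fin θ → ℤ)
  let m0 : ι → M.M := fun i => projL M.grM M.internal (i.1 : Fin θ → ℤ) (b i.2)
  have hm0 : ∀ i : ι, m0 i ∈ M.grM (i.1 : Fin θ → ℤ) :=
    fun i => projL_mem _ _ _ _
  let f : (∀ i : ι, (A i).M) →ₗ[k] M.M :=
    ∑ i : ι, (univφ C (i.1 : Fin θ → ℤ) M (m0 i) (hm0 i)) ∘ₗ LinearMap.proj i
  have hrange : ∀ i : ι, m0 i ∈ LinearMap.range f := by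
    intro i
    refine ⟨(Pi.single (M := fun j : ι => (A j).M) i ((Jmod C (i.1 : Fin θ → ℤ)).mkQ 1)), ?_⟩
    show (∑ i' : ι, (univφ C (i'.1 : Fin θ → ℤ) M (m0 i') (hm0 i')) ∘ₗ LinearMap.proj i')
      ((Pi.single (M := fun j : ι => (A j).M) i ((Jmod C (i.1 : Fin θ → ℤ)).mkQ 1))) = m0 i
    erw [LinearMap.sum_apply]
    erw [Finset.sum_eq_single i]
    · show univφ C (i.1 : Fin θ → ℤ) M (m0 i) (hm0 i)
        ((Pi.single (M := fun j : ι => (A j).M) i ((Jmod C (i.1 : Fin θ → ℤ)).mkQ 1)) i) = m0 i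
      erw [Pi.single_eq_same, univφ_mk, map_one, Module.End.one_apply]
    · intro i' _ hne
      show univφ C (i'.1 : Fin θ → ℤ) M (m0 i') (hm0 i')
        ((Pi.single (M := fun j : ι => (A j).M) i ((Jmod C (i.1 : Fin θ → ℤ)).mkQ 1)) i') = 0
      erw [Pi.single_eq_of_ne hne, map_zero]
    · intro h
      exact absurd (Finset.mem_univ i) h
  refine ⟨piCMod A, f, piCMod_projective A (fun i => Pmod_projective C _), ?_, ?_⟩
  · have hmem : f ∈ homC (piCMod A) M := by
      apply Submodule.sum_mem
      intro i _
      constructor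
      · intro u x
        show univφ C (i.1 : Fin θ → ℤ) M (m0 i) (hm0 i) ((piρ A u x) i)
          = M.ρ u (univφ C (i.1 : Fin θ → ℤ) M (m0 i) (hm0 i) (x i))
        show univφ C (i.1 : Fin θ → ℤ) M (m0 i) (hm0 i) ((A i).ρ u (x i))
          = M.ρ u (univφ C (i.1 : Fin θ → ℤ) M (m0 i) (hm0 i) (x i))
        exact (univφ_CHom C _ M (m0 i) (hm0 i)).1 u (x i)
      · intro ν x hx
        exact (univφ_CHom C _ M (m0 i) (hm0 i)).2 ν (x i) (hx i trivial)
    exact hmem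
  · have htop : ⊤ ≤ LinearMap.range f := by
      rw [← b.span_eq, Submodule.span_le]
      rintro _ ⟨j, rfl⟩
      have hbj : b j = ∑ ν ∈ suppD M.grM M.internal (b j), projL M.grM M.internal ν (b j) :=
        (sum_projL M.grM M.internal (b j) _ (subset_refl _)).symm
      rw [SetLike.mem_coe, hbj]
      apply Submodule.sum_mem
      intro ν hν
      have hνD : ν ∈ D := Finset.mem_biUnion.mpr ⟨j, Finset.mem_univ j, hν⟩
      exact hrange (⟨ν, hνD⟩, j)
    intro y
    exact htop (Submodule.mem_top : y ∈ ⊤)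
end

section
/- Highest-weight vectors in Verma modules: let M be a left module over an algebra as in the context and let m ∈ M satisfy E_j·m = 0 for all j ∈ I, and K_i·m = κ m, L_i·m = ℓ m for a fixed index i ∈ I and scalars κ, ℓ ∈ k. If t ≥ 1 is an integer such that (t)_{q_ii^{-1}}·κ = (t)_{q_ii}·ℓ, then E_j·(F_i^t·m) = 0 for every j ∈ I. -/
/-- The quantum number `(n)_x = 1 + x + ⋯ + x^{n−1}`. -/
def qnum {k : Type} [Field k] (n : ℕ) (x : k) : k :=
  ∑ j ∈ Finset.range n, x ^ j

/-- **Highest-weight vectors in Verma modules.** Let `M` be a left module over an algebra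
with elements `K_i, K_i⁻¹, L_i, L_i⁻¹, E_i, F_i` satisfying the Drinfeld double relations,
and let `m ∈ M` satisfy `E_j·m = 0` for all `j`, `K_i·m = κ m` and `L_i·m = ℓ m` for a
fixed `i` and scalars `κ, ℓ ∈ k`. If `t ≥ 1` satisfies `(t)_{q_ii⁻¹}·κ = (t)_{q_ii}·ℓ`,
then `E_j·(F_i^t·m) = 0` for every `j`. -/
theorem hw_vector_in_verma {k : Type} [Field k] {θ : ℕ} (hθ : 1 ≤ θ)
    (q : Fin θ → Fin θ → k) (hq : ∀ i j, q i j ≠ 0)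
    {A : Type} [Ring A] [Algebra k A]
    (K K' L L' E F : Fin θ → A)
    (hKK' : ∀ i, K i * K' i = 1) (hK'K : ∀ i, K' i * K i = 1)
    (hLL' : ∀ i, L i * L' i = 1) (hL'L : ∀ i, L' i * L i = 1)
    (hcomm : ∀ x ∈ Set.range K ∪ Set.range K' ∪ Set.range L ∪ Set.range L',
             ∀ y ∈ Set.range K ∪ Set.range K' ∪ Set.range L ∪ Set.range L',
             x * y = y * x)
    (hKE : ∀ i j, K i * E j = q i j • (E j * K i))
    (hLE : ∀ i j, L i * E j = (q j i)⁻¹ • (E j * L i))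
    (hKF : ∀ i j, K i * F j = (q i j)⁻¹ • (F j * K i))
    (hLF : ∀ i j, L i * F j = q j i • (F j * L i))
    (hEF : ∀ i j, E i * F j - F j * E i = if i = j then K i - L i else 0)
    {M : Type} [AddCommGroup M] [Module A M]
    (m : M) (i : Fin θ) (κ ℓ : k)
    (hEm : ∀ j, E j • m = 0)
    (hKm : K i • m = algebraMap k A κ • m)
    (hLm : L i • m = algebraMap k A ℓ • m)
    (t : ℕ) (ht : 1 ≤ t)
    (hqt : qnum t (q i i)⁻¹ * κ = qnum t (q i i) * ℓ) :
    ∀ j, E j • (F i ^ t • m) = 0 := by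
  intro j
  by_cases hji : j = i
  · subst hji
    set x := q j j with hxdef
    have hKn : ∀ n : ℕ, K j • (F j ^ n • m)
        = algebraMap k A (x⁻¹ ^ n * κ) • (F j ^ n • m) := by
      intro n
      induction n with
      | zero => simpa using hKm
      | succ n ih =>
        rw [pow_succ', mul_smul, ← mul_smul (K j) (F j), hKF, Algebra.smul_def,
          mul_smul, mul_smul, ih, ← mul_smul (F j), ← Algebra.commutes,
          mul_smul, ← mul_smul (algebraMap k A x⁻¹), ← map_mul]
        have hc : x⁻¹ * (x⁻¹ ^ n * κ) = x⁻¹ ^ (n + 1) * κ := by ring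
        rw [hc]
    have hLn : ∀ n : ℕ, L j • (F j ^ n • m)
        = algebraMap k A (x ^ n * ℓ) • (F j ^ n • m) := by
      intro n
      induction n with
      | zero => simpa using hLm
      | succ n ih =>
        rw [pow_succ', mul_smul, ← mul_smul (L j) (F j), hLF, Algebra.smul_def,
          mul_smul, mul_smul, ih, ← mul_smul (F j), ← Algebra.commutes,
          mul_smul, ← mul_smul (algebraMap k A x), ← map_mul]
        have hc : x * (x ^ n * ℓ) = x ^ (n + 1) * ℓ := by ring
        rw [hc]
    have hEFj : E j * F j = F j * E j + (K j - L j) := by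
      have h := hEF j j
      simp only [if_pos] at h
      rw [sub_eq_iff_eq_add] at h
      rw [h]; abel
    have key : ∀ n : ℕ, E j • (F j ^ n • m)
        = algebraMap k A (qnum n x⁻¹ * κ - qnum n x * ℓ) • (F j ^ (n - 1) • m) := by
      intro n
      induction n with
      | zero => simp [qnum, hEm]
      | succ n ih =>
        have step : E j • (F j ^ (n + 1) • m)
            = F j • (E j • (F j ^ n • m)) + K j • (F j ^ n • m) - L j • (F j ^ n • m) := by
          rw [pow_succ', mul_smul, ← mul_smul (E j) (F j), hEFj]
          simp only [add_smul, sub_smul, mul_smul]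
          abel
        have hshift : algebraMap k A (qnum n x⁻¹ * κ - qnum n x * ℓ) • (F j ^ (n - 1 + 1) • m)
            = algebraMap k A (qnum n x⁻¹ * κ - qnum n x * ℓ) • (F j ^ n • m) := by
          cases n with
          | zero => simp [qnum]
          | succ n => rfl
        rw [step, ih, hKn, hLn, ← mul_smul (F j), ← Algebra.commutes, mul_smul,
          ← mul_smul (F j), ← pow_succ', hshift, ← add_smul, ← sub_smul,
          ← map_add, ← map_sub]
        have hc : qnum n x⁻¹ * κ - qnum n x * ℓ + x⁻¹ ^ n * κ - x ^ n * ℓ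
            = qnum (n + 1) x⁻¹ * κ - qnum (n + 1) x * ℓ := by
          simp only [qnum, Finset.sum_range_succ]
          ring
        rw [hc, Nat.add_sub_cancel]
    rw [key t, hqt]
    simp
  · have hEFji : E j * F i = F i * E j := by
      have h := hEF j i
      rw [if_neg hji, sub_eq_zero] at h
      exact h
    have hall : ∀ n : ℕ, E j • (F i ^ n • m) = 0 := by
      intro n
      induction n with
      | zero => simpa using hEm j
      | succ n ih =>
        rw [pow_succ', mul_smul, ← mul_smul (E j) (F i), hEFji, mul_smul, ih, smul_zero]
    exact hall t
end

section
/- Invariance of the generalized Cartan matrix under reflection: for every j ≠ i there exists m ∈ ℕ with (m+1)_{p_ii}·(p_ii^m p_ij p_ji − 1) = 0 where p = r_i(q), and the Cartan entry computed from p, namely c'_{ij} = −min{m ∈ ℕ : (m+1)_{p_ii}(p_ii^m p_ij p_ji − 1) = 0}, equals c_ij. Consequently the reflection σ_i determined by r_i(q) coincides with the reflection σ_i determined by q, and r_i(r_i(q)) = q. -/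
/-- The bicharacter on `ℤ^θ` attached to the matrix `q`:
`q(α, β) = ∏_{a,b} q_{ab}^{α_a β_b}`. -/
def bichar {k : Type} [Field k] {θ : ℕ} (q : Fin θ → Fin θ → kˣ)
    (α β : Fin θ → ℤ) : kˣ :=
  ∏ a : Fin θ, ∏ b : Fin θ, q a b ^ (α a * β b)

/-- The entries `c_ij` of row `i` of the generalized Cartan matrix of `q`:
`c_ii = 2` and `c_ij = −min{m ∈ ℕ : (m+1)_{q_ii}(q_ii^m q_ij q_ji − 1) = 0}` for
`j ≠ i`. -/
noncomputable def cartanEntry {k : Type} [Field k] {θ : ℕ}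
    (q : Fin θ → Fin θ → kˣ) (i j : Fin θ) : ℤ :=
  if j = i then 2
  else -(sInf {m : ℕ |
    qnum (m + 1) (q i i : k) * ((q i i : k) ^ m * (q i j : k) * (q j i : k) - 1) = 0} : ℕ)

/-- The reflection `σ_i` of `ℤ^θ` determined by `q`: `σ_i(α_j) = α_j − c_ij α_i`,
extended linearly, i.e. `σ_i(μ) = μ − (∑_j c_ij μ_j) α_i`. -/
noncomputable def sigmaRefl {k : Type} [Field k] {θ : ℕ}
    (q : Fin θ → Fin θ → kˣ) (i : Fin θ) (μ : Fin θ → ℤ) : Fin θ → ℤ :=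
  μ - (∑ j : Fin θ, cartanEntry q i j * μ j) • Pi.single i 1

/-- The reflected matrix `r_i(q)`, with entries
`r_i(q)_{jl} = q(σ_i(α_j), σ_i(α_l))`. -/
noncomputable def riMatrix {k : Type} [Field k] {θ : ℕ}
    (q : Fin θ → Fin θ → kˣ) (i : Fin θ) : Fin θ → Fin θ → kˣ :=
  fun a b => bichar q (sigmaRefl q i (Pi.single a 1)) (sigmaRefl q i (Pi.single b 1))

section Auxiliary

variable {k : Type} [Field k] {θ : ℕ}

lemma bichar_add_left (q : Fin θ → Fin θ → kˣ) (α α' β : Fin θ → ℤ) :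
    bichar q (α + α') β = bichar q α β * bichar q α' β := by
  simp [bichar, add_mul, zpow_add, Finset.prod_mul_distrib]

lemma bichar_add_right (q : Fin θ → Fin θ → kˣ) (α β β' : Fin θ → ℤ) :
    bichar q α (β + β') = bichar q α β * bichar q α β' := by
  simp [bichar, mul_add, zpow_add, Finset.prod_mul_distrib]

lemma bichar_smul_left (q : Fin θ → Fin θ → kˣ) (n : ℤ) (α β : Fin θ → ℤ) :
    bichar q (n • α) β = bichar q α β ^ n := by
  unfold bichar
  rw [← Finset.prod_zpow]
  refine Finset.prod_congr rfl fun a _ => ?_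
  rw [← Finset.prod_zpow]
  refine Finset.prod_congr rfl fun b _ => ?_
  rw [← zpow_mul]
  congr 1
  simp [mul_comm, mul_assoc, mul_left_comm]

lemma bichar_smul_right (q : Fin θ → Fin θ → kˣ) (n : ℤ) (α β : Fin θ → ℤ) :
    bichar q α (n • β) = bichar q α β ^ n := by
  unfold bichar
  rw [← Finset.prod_zpow]
  refine Finset.prod_congr rfl fun a _ => ?_
  rw [← Finset.prod_zpow]
  refine Finset.prod_congr rfl fun b _ => ?_
  rw [← zpow_mul]
  congr 1
  simp [mul_comm, mul_assoc, mul_left_comm]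

lemma bichar_single (q : Fin θ → Fin θ → kˣ) (a b : Fin θ) :
    bichar q (Pi.single a 1) (Pi.single b 1) = q a b := by
  unfold bichar
  rw [Finset.prod_eq_single a
    (fun s _ hs => Finset.prod_eq_one (fun t _ => by simp [Pi.single_apply, hs]))
    (by simp)]
  rw [Finset.prod_eq_single b (fun t _ ht => by simp [Pi.single_apply, ht]) (by simp)]
  simp

lemma bichar_expand (q : Fin θ → Fin θ → kˣ) (α β γ δ : Fin θ → ℤ) (c d : ℤ) :
    bichar q (α - c • γ) (β - d • δ) =
      bichar q α β * bichar q α δ ^ (-d) * bichar q γ β ^ (-c) * bichar q γ δ ^ (c * d) := by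
  rw [sub_eq_add_neg, sub_eq_add_neg, ← neg_smul, ← neg_smul, bichar_add_left,
    bichar_add_right, bichar_add_right, bichar_smul_left, bichar_smul_left,
    bichar_smul_right, bichar_smul_right, ← zpow_mul, neg_mul_neg]
  refine Additive.ofMul.injective ?_
  simp only [ofMul_mul, ofMul_zpow]
  module

lemma cartanEntry_self (q : Fin θ → Fin θ → kˣ) (i : Fin θ) : cartanEntry q i i = 2 := by
  simp [cartanEntry]

lemma sigmaRefl_single (q : Fin θ → Fin θ → kˣ) (i a : Fin θ) :
    sigmaRefl q i (Pi.single a 1) = Pi.single a 1 - cartanEntry q i a • Pi.single i 1 := by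
  unfold sigmaRefl
  congr 2
  rw [Finset.sum_eq_single a (fun t _ ht => by simp [Pi.single_apply, ht]) (by simp)]
  simp

lemma riMatrix_apply (q : Fin θ → Fin θ → kˣ) (i a b : Fin θ) :
    riMatrix q i a b = q a b * q a i ^ (-(cartanEntry q i b)) * q i b ^ (-(cartanEntry q i a))
      * q i i ^ (cartanEntry q i a * cartanEntry q i b) := by
  unfold riMatrix
  rw [sigmaRefl_single, sigmaRefl_single, bichar_expand]
  simp only [bichar_single]

lemma unit_eq_one_of_val {x : kˣ} (h : (x : k) = 1) : x = 1 := Units.ext (by simpa using h)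

lemma key_sInf (x l u : kˣ)
    (hne : {m : ℕ | qnum (m+1) (x:k) * ((x:k)^m * (l:k) - 1) = 0}.Nonempty)
    (hu : u * l * x ^ (2 * sInf {m : ℕ | qnum (m+1) (x:k) * ((x:k)^m * (l:k) - 1) = 0}) = 1) :
    qnum (sInf {m : ℕ | qnum (m+1) (x:k) * ((x:k)^m * (l:k) - 1) = 0} + 1) (x:k) *
      ((x:k) ^ (sInf {m : ℕ | qnum (m+1) (x:k) * ((x:k)^m * (l:k) - 1) = 0}) * (u:k) - 1) = 0 ∧
    sInf {m : ℕ | qnum (m+1) (x:k) * ((x:k)^m * (u:k) - 1) = 0} =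
    sInf {m : ℕ | qnum (m+1) (x:k) * ((x:k)^m * (l:k) - 1) = 0} := by
  set S : Set ℕ := {m : ℕ | qnum (m+1) (x:k) * ((x:k)^m * (l:k) - 1) = 0} with hS
  set n0 := sInf S with hn0
  have hmem : qnum (n0+1) (x:k) * ((x:k)^n0 * (l:k) - 1) = 0 := Nat.sInf_mem hne
  have hmin : ∀ m, m < n0 → qnum (m+1) (x:k) * ((x:k)^m * (l:k) - 1) ≠ 0 :=
    fun m hm => Nat.notMem_of_lt_sInf (show m < sInf S from hm)
  have hmem' : qnum (n0+1) (x:k) = 0 ∨ x ^ n0 * l = 1 := by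
    rcases mul_eq_zero.1 hmem with h | h
    · exact Or.inl h
    · exact Or.inr (Units.ext (by push_cast; exact sub_eq_zero.1 h))
  have hSmem : qnum (n0+1) (x:k) * ((x:k)^n0 * (u:k) - 1) = 0 := by
    rcases hmem' with h | h
    · rw [h, zero_mul]
    · have hxu : x ^ n0 * u = 1 := by
        have e : x ^ n0 * u = (u * l * x ^ (2*n0)) * (x ^ n0 * l)⁻¹ := by
          simp only [← zpow_natCast]
          refine Additive.ofMul.injective ?_
          simp only [ofMul_mul, ofMul_zpow, ofMul_inv]
          push_cast
          module
        rw [e, h, hu, inv_one, mul_one]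
      have : ((x:k)^n0 * (u:k) - 1) = 0 := by
        have := congrArg (Units.val) hxu
        push_cast at this
        rw [sub_eq_zero]
        exact this
      rw [this, mul_zero]
  have hnotmem : ∀ m, m < n0 → qnum (m+1) (x:k) * ((x:k)^m * (u:k) - 1) ≠ 0 := by
    intro m hm hbad
    have hq : qnum (m+1) (x:k) ≠ 0 := fun h => hmin m hm (by rw [h, zero_mul])
    have hxl : ((x:k)^m * (l:k) - 1) ≠ 0 := fun h => hmin m hm (by rw [h, mul_zero])
    have hxu : x ^ m * u = 1 := by
      rcases mul_eq_zero.1 hbad with h | h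
      · exact absurd h hq
      · exact Units.ext (by push_cast; exact sub_eq_zero.1 h)
    rcases hmem' with hq0 | hx0
    · by_cases hx1 : (x:k) = 1
      · have hx1' : x = 1 := unit_eq_one_of_val hx1
        have hu1 : u = 1 := by rw [hx1', one_pow, one_mul] at hxu; exact hxu
        have hl1 : l = 1 := by rw [hx1', hu1, one_pow, one_mul, mul_one] at hu; exact hu
        have h0 : (0 : ℕ) ∈ S := by
          show qnum 1 (x:k) * ((x:k)^0 * (l:k) - 1) = 0
          rw [hl1]
          simp
        have : n0 = 0 := Nat.le_zero.1 (Nat.sInf_le h0)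
        omega
      · have hxp : x ^ (n0+1) = 1 := by
          refine Units.ext ?_
          push_cast
          have hgeo : qnum (n0+1) (x:k) * ((x:k) - 1) = (x:k)^(n0+1) - 1 :=
            geom_sum_mul (x:k) (n0+1)
          rw [hq0, zero_mul] at hgeo
          have := sub_eq_zero.1 hgeo.symm
          exact this
        have hmle : m + 1 ≤ n0 := hm
        have hc : ((n0 - 1 - m : ℕ) : ℤ) = (n0 : ℤ) - 1 - m := by omega
        have hxl' : x ^ (n0 - 1 - m) * l = 1 := by
          have e : x ^ (n0 - 1 - m) * l =
              (u * l * x ^ (2*n0)) * (x ^ m * u)⁻¹ * (x ^ (n0+1))⁻¹ := by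
            simp only [← zpow_natCast]
            rw [hc]
            refine Additive.ofMul.injective ?_
            simp only [ofMul_mul, ofMul_zpow, ofMul_inv]
            push_cast
            module
          rw [e, hxu, hxp, hu]
          simp
        refine hmin (n0 - 1 - m) (by omega) ?_
        have := congrArg (Units.val) hxl'
        push_cast at this
        rw [sub_eq_zero.2 this, mul_zero]
    · have hxml : x ^ m * l = 1 := by
        have e : x ^ m * l =
            (x ^ m * u) * ((x ^ n0 * l) * ((x ^ n0 * l) * (u * l * x ^ (2*n0))⁻¹)) := by
          simp only [← zpow_natCast]
          refine Additive.ofMul.injective ?_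
          simp only [ofMul_mul, ofMul_zpow, ofMul_inv]
          push_cast
          module
        rw [e, hxu, hx0, hu]
        simp
      refine hxl ?_
      have := congrArg (Units.val) hxml
      push_cast at this
      rw [sub_eq_zero]
      exact this
  refine ⟨hSmem, le_antisymm (Nat.sInf_le hSmem) ?_⟩
  by_contra hlt
  push_neg at hlt
  exact hnotmem _ hlt (Nat.sInf_mem (⟨n0, hSmem⟩ :
    Set.Nonempty {m : ℕ | qnum (m+1) (x:k) * ((x:k)^m * (u:k) - 1) = 0}))

lemma set_translate (q : Fin θ → Fin θ → kˣ) (i j : Fin θ) :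
    {m : ℕ | qnum (m + 1) (q i i : k) *
        ((q i i : k) ^ m * (q i j : k) * (q j i : k) - 1) = 0} =
    {m : ℕ | qnum (m + 1) (q i i : k) *
        ((q i i : k) ^ m * ((q i j * q j i : kˣ) : k) - 1) = 0} := by
  ext m
  rw [Set.mem_setOf_eq, Set.mem_setOf_eq, Units.val_mul, mul_assoc]

end Auxiliary

/-- **Invariance of the generalized Cartan matrix under reflection.** With
`p = r_i(q)`: for every `j ≠ i` there is `m ∈ ℕ` with
`(m+1)_{p_ii}(p_ii^m p_ij p_ji − 1) = 0`; the Cartan entries computed from `p` equal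
those computed from `q`; hence the reflection `σ_i` determined by `r_i(q)` coincides with
the one determined by `q`, and `r_i(r_i(q)) = q`. -/
theorem cartan_matrix_reflection_invariance {k : Type} [Field k] {θ : ℕ} (hθ : 1 ≤ θ)
    (q : Fin θ → Fin θ → kˣ) (i : Fin θ)
    (hq : ∀ j, j ≠ i → ∃ m : ℕ,
      qnum (m + 1) (q i i : k) * ((q i i : k) ^ m * (q i j : k) * (q j i : k) - 1) = 0) :
    (∀ j, j ≠ i → ∃ m : ℕ,
      qnum (m + 1) ((riMatrix q i) i i : k)
        * (((riMatrix q i) i i : k) ^ m * ((riMatrix q i) i j : k)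
            * ((riMatrix q i) j i : k) - 1) = 0) ∧
    (∀ j, cartanEntry (riMatrix q i) i j = cartanEntry q i j) ∧
    sigmaRefl (riMatrix q i) i = sigmaRefl q i ∧
    riMatrix (riMatrix q i) i = q := by
  classical
  have hcii : cartanEntry q i i = 2 := cartanEntry_self q i
  have hpii : riMatrix q i i i = q i i := by
    rw [riMatrix_apply, hcii]
    refine Additive.ofMul.injective ?_
    simp only [ofMul_mul, ofMul_zpow]
    module
  have main : ∀ j, j ≠ i →
      (∃ m : ℕ, qnum (m + 1) ((riMatrix q i) i i : k)
        * (((riMatrix q i) i i : k) ^ m * ((riMatrix q i) i j : k)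
            * ((riMatrix q i) j i : k) - 1) = 0) ∧
      cartanEntry (riMatrix q i) i j = cartanEntry q i j := by
    intro j hj
    have hne : ({m : ℕ | qnum (m+1) (q i i : k) *
        ((q i i : k) ^ m * ((q i j * q j i : kˣ) : k) - 1) = 0}).Nonempty := by
      obtain ⟨m, hm⟩ := hq j hj
      exact ⟨m, by rw [Set.mem_setOf_eq, Units.val_mul, ← mul_assoc]; exact hm⟩
    have hcj : cartanEntry q i j = -(sInf {m : ℕ | qnum (m+1) (q i i : k) *
        ((q i i : k) ^ m * ((q i j * q j i : kˣ) : k) - 1) = 0} : ℕ) := by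
      simp only [cartanEntry]
      rw [if_neg hj, set_translate q i j]
    have hrel : (riMatrix q i i j * riMatrix q i j i) * (q i j * q j i) *
        (q i i) ^ (2 * sInf {m : ℕ | qnum (m+1) (q i i : k) *
          ((q i i : k) ^ m * ((q i j * q j i : kˣ) : k) - 1) = 0}) = 1 := by
      rw [riMatrix_apply q i i j, riMatrix_apply q i j i, hcii, hcj]
      simp only [← zpow_natCast]
      push_cast
      refine Additive.ofMul.injective ?_
      simp only [ofMul_mul, ofMul_zpow, ofMul_one]
      module
    obtain ⟨hmemS, hsInf⟩ :=
      key_sInf (q i i) (q i j * q j i) (riMatrix q i i j * riMatrix q i j i) hne hrel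
    constructor
    · refine ⟨sInf {m : ℕ | qnum (m+1) (q i i : k) *
        ((q i i : k) ^ m * ((q i j * q j i : kˣ) : k) - 1) = 0}, ?_⟩
      rw [hpii, mul_assoc, ← Units.val_mul]
      exact hmemS
    · simp only [cartanEntry]
      rw [if_neg hj, if_neg hj, set_translate (riMatrix q i) i j, set_translate q i j,
        hpii, hsInf]
  have part2 : ∀ j, cartanEntry (riMatrix q i) i j = cartanEntry q i j := by
    intro j
    by_cases hj : j = i
    · subst hj; rw [cartanEntry_self, cartanEntry_self]
    · exact (main j hj).2
  have part3 : sigmaRefl (riMatrix q i) i = sigmaRefl q i := by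
    funext μ
    simp only [sigmaRefl, part2]
  refine ⟨fun j hj => (main j hj).1, part2, part3, ?_⟩
  funext a b
  rw [riMatrix_apply (riMatrix q i) i a b]
  simp only [part2]
  rw [riMatrix_apply q i a b, riMatrix_apply q i a i, riMatrix_apply q i i b, hpii, hcii]
  refine Additive.ofMul.injective ?_
  simp only [ofMul_mul, ofMul_zpow]
  module
end
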